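/- arXiv:1310.7558 — 3 statements merged into one kernel-verified Lean document; each statement's English description precedes it below -/
import Mathlib

section
/- Let X be a compact path-connected subset of the plane and let 𝒴 be a finite family of compact path-connected subsets of the plane such that {X} ∪ 𝒴 is simple and the sets Y ∩ X for Y ∈ 𝒴 are pairwise disjoint. Then for any two distinct points x₁, x₂ ∈ X there is an arc A ⊆ X between x₁ and x₂ such that {A} ∪ 𝒴 is simple. -/
open Set

noncomputable section

/-- The closed upper halfplane. -/
def UpperHalf : Set (ℝ × ℝ) := {p | 0 ≤ p.2}

/-- The baseline `ℝ × {0}`. -/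
def Baseline : Set (ℝ × ℝ) := {p | p.2 = 0}

/-- The base of a set: its intersection with the baseline. -/
def base (X : Set (ℝ × ℝ)) : Set (ℝ × ℝ) := X ∩ Baseline

/-- `A` is an arc between `x` and `y`: the image of a continuous injective map on `[0,1]`. -/
def IsArcBetween (A : Set (ℝ × ℝ)) (x y : ℝ × ℝ) : Prop :=
  ∃ φ : ℝ → ℝ × ℝ, ContinuousOn φ (Icc 0 1) ∧ InjOn φ (Icc 0 1) ∧
    φ 0 = x ∧ φ 1 = y ∧ A = φ '' Icc 0 1

/-- A family of sets is simple if the intersection of every nonempty subfamily is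
empty or path-connected. -/
def IsSimpleFamily (F : Set (Set (ℝ × ℝ))) : Prop :=
  ∀ G ⊆ F, G.Nonempty → ⋂₀ G = ∅ ∨ IsPathConnected (⋂₀ G)

/-- A grounded set: a compact path-connected subset of the upper halfplane whose base
is a nonempty segment of the baseline. -/
def Grounded (X : Set (ℝ × ℝ)) : Prop :=
  X ⊆ UpperHalf ∧ IsCompact X ∧ IsPathConnected X ∧
    ∃ a b : ℝ, a ≤ b ∧ base X = Icc a b ×ˢ ({0} : Set ℝ)

/-- A grounded family: a finite simple family of grounded sets with pairwise disjoint bases. -/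
def GroundedFamily (F : Set (Set (ℝ × ℝ))) : Prop :=
  F.Finite ∧ (∀ X ∈ F, Grounded X) ∧ IsSimpleFamily F ∧
    F.Pairwise fun X Y => Disjoint (base X) (base Y)

/-- The intersection graph of `F` is properly colorable with `n` colors. -/
def FamColorable (F : Set (Set (ℝ × ℝ))) (n : ℕ) : Prop :=
  ∃ c : Set (ℝ × ℝ) → ℕ, (∀ X ∈ F, c X < n) ∧
    ∀ X ∈ F, ∀ Y ∈ F, X ≠ Y → (X ∩ Y).Nonempty → c X ≠ c Y

/-- The clique number of the intersection graph of `F` is at most `k`. -/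
def CliqueBdd (F : Set (Set (ℝ × ℝ))) (k : ℕ) : Prop :=
  ∀ G ⊆ F, (G.Pairwise fun X Y => (X ∩ Y).Nonempty) → G.ncard ≤ k

/-- `X ≺ Y` : the base of `X` lies entirely to the left of the base of `Y`. -/
def Before (X Y : Set (ℝ × ℝ)) : Prop :=
  ∀ p ∈ base X, ∀ q ∈ base Y, p.1 < q.1

/-- The exterior of `X`: the unique unbounded path-connected component of
`UpperHalf \ X` (described as the set of points of `UpperHalf \ X` whose
path component therein is unbounded). -/
def extSet (X : Set (ℝ × ℝ)) : Set (ℝ × ℝ) :=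
  {p | p ∈ UpperHalf \ X ∧ ¬ Bornology.IsBounded (pathComponentIn (UpperHalf \ X) p)}

/-- `X` is surrounded by `S` if it is disjoint from `S ∪ ext(S)`. -/
def SurroundedBy (X S : Set (ℝ × ℝ)) : Prop :=
  Disjoint X (S ∪ extSet S)

/-- `cut R S`: the closure of the path-connected component of `R \ S` containing `base R`. -/
def cut (R S : Set (ℝ × ℝ)) : Set (ℝ × ℝ) :=
  closure (⋃ x ∈ base R, pathComponentIn (R \ S) x)

/-- `C` is a path-connected component of `U`. -/
def IsPathComponentOf (C U : Set (ℝ × ℝ)) : Prop :=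
  ∃ p ∈ U, C = pathComponentIn U p

/-- The closed region enclosed by a Jordan curve `C`: the union of `C` with all points
whose path component in the complement of `C` is bounded. -/
def JordanRegion (C : Set (ℝ × ℝ)) : Set (ℝ × ℝ) :=
  C ∪ {x | x ∉ C ∧ Bornology.IsBounded (pathComponentIn Cᶜ x)}

/-- `L` is a line in the plane. -/
def IsLine (L : Set (ℝ × ℝ)) : Prop :=
  ∃ a d : ℝ × ℝ, d ≠ 0 ∧ L = {p | ∃ t : ℝ, p = a + t • d}

/-- `x` is a neighbor of `R i` (within region `J`, among `R 0, …, R (m-1)`). -/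
def Nbr (J : Set (ℝ × ℝ)) (m : ℕ) (R : ℕ → Set (ℝ × ℝ)) (i : ℕ) (x : ℝ × ℝ) : Prop :=
  x ∈ J ∧ ∃ A y, y ∈ R i ∧ A ⊆ J ∧ IsArcBetween A x y ∧ ∀ j < m, j ≠ i → Disjoint A (R j)

/-- `Iset J m R i`: the points of `J` that are neighbors of both `R i` and `R (i+1)`. -/
def Iset (J : Set (ℝ × ℝ)) (m : ℕ) (R : ℕ → Set (ℝ × ℝ)) (i : ℕ) : Set (ℝ × ℝ) :=
  {x | Nbr J m R i x ∧ Nbr J m R (i + 1) x}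

/-- The alternating sequence `R 0, I 0, R 1, I 1, …, R (m-1)` (0-based). -/
def seqRI (R I : ℕ → Set (ℝ × ℝ)) (n : ℕ) : Set (ℝ × ℝ) :=
  if n % 2 = 0 then R (n / 2) else I (n / 2)

end


open Set

noncomputable section

namespace SimpleArc

/-- A "good" collapsing set for `f`: closed, contains the endpoints of `[0,1]`, and
`f` takes equal values at the two endpoints of every complementary gap. -/
def GoodK (f : ℝ → ℝ × ℝ) (K : Set ℝ) : Prop :=
  IsClosed K ∧ K ⊆ Icc 0 1 ∧ 0 ∈ K ∧ 1 ∈ K ∧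
    ∀ t ∈ Icc (0:ℝ) 1, t ∉ K → f (sSup (K ∩ Icc 0 t)) = f (sInf (K ∩ Icc t 1))

lemma goodK_Icc (f : ℝ → ℝ × ℝ) : GoodK f (Icc 0 1) :=
  ⟨isClosed_Icc, Subset.rfl, ⟨le_refl 0, zero_le_one⟩, ⟨zero_le_one, le_refl 1⟩,
    fun t ht ht' => absurd ht ht'⟩

lemma exists_minimal_goodK (f : ℝ → ℝ × ℝ) (hf : Continuous f) :
    ∃ K, GoodK f K ∧ ∀ K', GoodK f K' → K' ⊆ K → K' = K := by
  have hz : ∀ c ⊆ {K | GoodK f K}, IsChain (· ⊆ ·) c → ∃ lb ∈ {K | GoodK f K}, ∀ s ∈ c, lb ⊆ s := ?_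
  · obtain ⟨m, hm⟩ := zorn_superset {K | GoodK f K} hz
    exact ⟨m, hm.1, fun K' h1 h2 => le_antisymm h2 (hm.2 h1 h2)⟩
  intro c hc hchain
  rcases c.eq_empty_or_nonempty with rfl | hcne
  · exact ⟨Icc 0 1, goodK_Icc f, by simp⟩
  refine ⟨⋂₀ c, ?_, fun s hs => sInter_subset_of_mem hs⟩
  obtain ⟨K₀, hK₀⟩ := hcne
  have hgood : ∀ K ∈ c, GoodK f K := fun K hK => hc hK
  refine ⟨isClosed_sInter fun K hK => (hgood K hK).1,
    (sInter_subset_of_mem hK₀).trans (hgood K₀ hK₀).2.1,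
    fun K hK => (hgood K hK).2.2.1, fun K hK => (hgood K hK).2.2.2.1, ?_⟩
  intro t ht htK
  -- endpoints of gaps of each member
  set aa : Set ℝ → ℝ := fun K => sSup (K ∩ Icc 0 t) with haa
  set bb : Set ℝ → ℝ := fun K => sInf (K ∩ Icc t 1) with hbb
  have haRmem : ∀ K ∈ c, aa K ∈ K ∩ Icc 0 t := by
    intro K hK
    exact ((hgood K hK).1.inter isClosed_Icc).csSup_mem
      ⟨0, (hgood K hK).2.2.1, le_refl 0, ht.1⟩ (bddAbove_Icc.mono inter_subset_right)
  have hbRmem : ∀ K ∈ c, bb K ∈ K ∩ Icc t 1 := by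
    intro K hK
    exact ((hgood K hK).1.inter isClosed_Icc).csInf_mem
      ⟨1, (hgood K hK).2.2.2.1, ht.2, le_refl 1⟩ (bddBelow_Icc.mono inter_subset_right)
  have hfab : ∀ K ∈ c, f (aa K) = f (bb K) := by
    intro K hK
    by_cases htK' : t ∈ K
    · have h1 : aa K = t := by
        refine le_antisymm (csSup_le ⟨0, (hgood K hK).2.2.1, le_refl 0, ht.1⟩
          fun x hx => hx.2.2) (le_csSup (bddAbove_Icc.mono inter_subset_right)
          ⟨htK', ht.1, le_refl t⟩)
      have h2 : bb K = t := by
        refine le_antisymm (csInf_le (bddBelow_Icc.mono inter_subset_right)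
          ⟨htK', le_refl t, ht.2⟩) (le_csInf ⟨1, (hgood K hK).2.2.2.1, ht.2, le_refl 1⟩
          fun x hx => hx.2.1)
      rw [show aa K = sSup (K ∩ Icc 0 t) from rfl] at h1 ⊢
      rw [h1, h2]
    · exact (hgood K hK).2.2.2.2 t ht htK'
  -- a-values are bounded below by 0, b-values above by 1
  have haset : (aa '' c).Nonempty := ⟨aa K₀, ⟨K₀, hK₀, rfl⟩⟩
  have hbset : (bb '' c).Nonempty := ⟨bb K₀, ⟨K₀, hK₀, rfl⟩⟩
  have habdd : BddBelow (aa '' c) := ⟨0, by rintro x ⟨K, hK, rfl⟩; exact ((hgood K hK).2.1 (haRmem K hK).1).1⟩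
  have hbbdd : BddAbove (bb '' c) := ⟨1, by rintro x ⟨K, hK, rfl⟩; exact ((hgood K hK).2.1 (hbRmem K hK).1).2⟩
  set α := sInf (aa '' c) with hα
  set β := sSup (bb '' c) with hβ
  -- monotonicity of aa/bb in K
  have haaMono : ∀ K K', K ∈ c → K' ∈ c → K ⊆ K' → aa K ≤ aa K' := by
    intro K K' hK hK' hsub
    exact csSup_le_csSup (bddAbove_Icc.mono inter_subset_right)
      ⟨0, (hgood K hK).2.2.1, le_refl 0, ht.1⟩ (inter_subset_inter_left _ hsub)
  have hbbMono : ∀ K K', K ∈ c → K' ∈ c → K ⊆ K' → bb K' ≤ bb K := by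
    intro K K' hK hK' hsub
    exact csInf_le_csInf (bddBelow_Icc.mono inter_subset_right)
      ⟨1, (hgood K hK).2.2.2.1, ht.2, le_refl 1⟩ (inter_subset_inter_left _ hsub)
  -- α belongs to every member of the chain
  have hαmem : ∀ K ∈ c, α ∈ K := by
    intro K hK
    have : α ∈ closure K := by
      rw [Metric.mem_closure_iff]
      intro ε hε
      obtain ⟨x, ⟨K'', hK'', rfl⟩, hx⟩ := exists_lt_of_csInf_lt haset
        (by show α < α + ε; linarith)
      rcases hchain.total hK hK'' with hsub | hsub
      · refine ⟨aa K, (haRmem K hK).1, ?_⟩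
        have h1 : α ≤ aa K := csInf_le habdd ⟨K, hK, rfl⟩
        have h2 : aa K ≤ aa K'' := haaMono K K'' hK hK'' hsub
        rw [Real.dist_eq, abs_lt]; constructor <;> linarith
      · refine ⟨aa K'', hsub (haRmem K'' hK'').1, ?_⟩
        have h1 : α ≤ aa K'' := csInf_le habdd ⟨K'', hK'', rfl⟩
        rw [Real.dist_eq, abs_lt]; constructor <;> linarith
    rwa [(hgood K hK).1.closure_eq] at this
  have hβmem : ∀ K ∈ c, β ∈ K := by
    intro K hK
    have : β ∈ closure K := by
      rw [Metric.mem_closure_iff]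
      intro ε hε
      obtain ⟨x, ⟨K'', hK'', rfl⟩, hx⟩ := exists_lt_of_lt_csSup hbset
        (by show β - ε < β; linarith)
      rcases hchain.total hK hK'' with hsub | hsub
      · refine ⟨bb K, (hbRmem K hK).1, ?_⟩
        have h1 : bb K ≤ β := le_csSup hbbdd ⟨K, hK, rfl⟩
        have h2 : bb K'' ≤ bb K := hbbMono K K'' hK hK'' hsub
        rw [Real.dist_eq, abs_lt]; constructor <;> linarith
      · refine ⟨bb K'', hsub (hbRmem K'' hK'').1, ?_⟩
        have h1 : bb K'' ≤ β := le_csSup hbbdd ⟨K'', hK'', rfl⟩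
        rw [Real.dist_eq, abs_lt]; constructor <;> linarith
    rwa [(hgood K hK).1.closure_eq] at this
  have hαIcc : α ∈ Icc 0 t := by
    have hK₁ := hK₀
    set K₁ := K₀
    constructor
    · exact le_csInf haset (by rintro x ⟨K, hK, rfl⟩; exact (haRmem K hK).2.1)
    · exact le_trans (csInf_le habdd ⟨K₁, hK₁, rfl⟩) (haRmem K₁ hK₁).2.2
  have hβIcc : β ∈ Icc t 1 := by
    have hK₁ := hK₀
    set K₁ := K₀
    constructor
    · exact le_trans (hbRmem K₁ hK₁).2.1 (le_csSup hbbdd ⟨K₁, hK₁, rfl⟩)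
    · exact csSup_le hbset (by rintro x ⟨K, hK, rfl⟩; exact (hbRmem K hK).2.2)
  -- the sup/inf over the intersection agree with α, β
  have hsupEq : sSup (⋂₀ c ∩ Icc 0 t) = α := by
    apply le_antisymm
    · refine csSup_le ⟨α, mem_sInter.2 (fun K hK => hαmem K hK), hαIcc⟩ ?_
      intro x hx
      apply le_csInf haset
      rintro y ⟨K, hK, rfl⟩
      exact le_csSup (bddAbove_Icc.mono inter_subset_right) ⟨hx.1 K hK, hx.2⟩
    · exact le_csSup (bddAbove_Icc.mono inter_subset_right)
        ⟨mem_sInter.2 (fun K hK => hαmem K hK), hαIcc⟩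
  have hinfEq : sInf (⋂₀ c ∩ Icc t 1) = β := by
    apply le_antisymm
    · exact csInf_le (bddBelow_Icc.mono inter_subset_right)
        ⟨mem_sInter.2 (fun K hK => hβmem K hK), hβIcc⟩
    · refine le_csInf ⟨β, mem_sInter.2 (fun K hK => hβmem K hK), hβIcc⟩ ?_
      intro x hx
      apply csSup_le hbset
      rintro y ⟨K, hK, rfl⟩
      exact csInf_le (bddBelow_Icc.mono inter_subset_right) ⟨hx.1 K hK, hx.2⟩
  rw [hsupEq, hinfEq]
  -- f α = f β by approximation along the chain
  have key : ∀ ε > (0:ℝ), dist (f α) (f β) < ε := by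
    intro ε hε
    obtain ⟨δ₁, hδ₁, hfδ₁⟩ := Metric.continuous_iff.mp hf α (ε/2) (by linarith)
    obtain ⟨δ₂, hδ₂, hfδ₂⟩ := Metric.continuous_iff.mp hf β (ε/2) (by linarith)
    obtain ⟨x₁, ⟨K₁, hK₁, rfl⟩, hx₁⟩ := exists_lt_of_csInf_lt haset
      (show α < α + δ₁ by linarith)
    obtain ⟨x₂, ⟨K₂, hK₂, rfl⟩, hx₂⟩ := exists_lt_of_lt_csSup hbset
      (show β - δ₂ < β by linarith)
    rcases hchain.total hK₁ hK₂ with hsub | hsub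
    · -- K₁ ⊆ K₂, use K₁
      have ha : aa K₁ < α + δ₁ := hx₁
      have hb : β - δ₂ < bb K₁ := lt_of_lt_of_le hx₂ (hbbMono K₁ K₂ hK₁ hK₂ hsub)
      have h1 : dist (aa K₁) α < δ₁ := by
        have : α ≤ aa K₁ := csInf_le habdd ⟨K₁, hK₁, rfl⟩
        rw [Real.dist_eq, abs_lt]; constructor <;> linarith
      have h2 : dist (bb K₁) β < δ₂ := by
        have : bb K₁ ≤ β := le_csSup hbbdd ⟨K₁, hK₁, rfl⟩
        rw [Real.dist_eq, abs_lt]; constructor <;> linarith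
      calc dist (f α) (f β) ≤ dist (f α) (f (aa K₁)) + dist (f (aa K₁)) (f β) := dist_triangle _ _ _
        _ = dist (f α) (f (aa K₁)) + dist (f (bb K₁)) (f β) := by rw [hfab K₁ hK₁]
        _ < ε/2 + ε/2 := by
            have := hfδ₁ _ h1
            have := hfδ₂ _ h2
            rw [dist_comm (f α)]
            gcongr
        _ = ε := by ring
    · -- K₂ ⊆ K₁, use K₂
      have ha : aa K₂ < α + δ₁ := lt_of_le_of_lt (haaMono K₂ K₁ hK₂ hK₁ hsub) hx₁
      have hb : β - δ₂ < bb K₂ := hx₂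
      have h1 : dist (aa K₂) α < δ₁ := by
        have : α ≤ aa K₂ := csInf_le habdd ⟨K₂, hK₂, rfl⟩
        rw [Real.dist_eq, abs_lt]; constructor <;> linarith
      have h2 : dist (bb K₂) β < δ₂ := by
        have : bb K₂ ≤ β := le_csSup hbbdd ⟨K₂, hK₂, rfl⟩
        rw [Real.dist_eq, abs_lt]; constructor <;> linarith
      calc dist (f α) (f β) ≤ dist (f α) (f (aa K₂)) + dist (f (aa K₂)) (f β) := dist_triangle _ _ _
        _ = dist (f α) (f (aa K₂)) + dist (f (bb K₂)) (f β) := by rw [hfab K₂ hK₂]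
        _ < ε/2 + ε/2 := by
            have := hfδ₁ _ h1
            have := hfδ₂ _ h2
            rw [dist_comm (f α)]
            gcongr
        _ = ε := by ring
  exact eq_of_dist_eq_zero (by
    by_contra h
    have h0 : 0 < dist (f α) (f β) := lt_of_le_of_ne dist_nonneg (Ne.symm h)
    exact lt_irrefl _ (key _ h0))



variable {f : ℝ → ℝ × ℝ} {K : Set ℝ}

def rho (K : Set ℝ) (t : ℝ) : ℝ := sSup (K ∩ Icc 0 t)

def gg (f : ℝ → ℝ × ℝ) (K : Set ℝ) (t : ℝ) : ℝ × ℝ := f (rho K t)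

lemma rho_mem (hK : GoodK f K) {t : ℝ} (ht : t ∈ Icc (0:ℝ) 1) : rho K t ∈ K ∩ Icc 0 t :=
  (hK.1.inter isClosed_Icc).csSup_mem ⟨0, hK.2.2.1, le_refl 0, ht.1⟩
    (bddAbove_Icc.mono inter_subset_right)

lemma rho_mono (hK : GoodK f K) {s t : ℝ} (hs : 0 ≤ s) (hst : s ≤ t) : rho K s ≤ rho K t :=
  csSup_le_csSup (bddAbove_Icc.mono inter_subset_right) ⟨0, hK.2.2.1, le_refl 0, hs⟩
    (inter_subset_inter_right _ (Icc_subset_Icc_right hst))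

lemma rho_eq_self (hK : GoodK f K) {t : ℝ} (htK : t ∈ K) (ht : 0 ≤ t) : rho K t = t :=
  le_antisymm (csSup_le ⟨t, htK, ht, le_refl t⟩ fun _ hx => hx.2.2)
    (le_csSup (bddAbove_Icc.mono inter_subset_right) ⟨htK, ht, le_refl t⟩)

lemma inf_mem (hK : GoodK f K) {t : ℝ} (ht : t ∈ Icc (0:ℝ) 1) :
    sInf (K ∩ Icc t 1) ∈ K ∩ Icc t 1 :=
  (hK.1.inter isClosed_Icc).csInf_mem ⟨1, hK.2.2.2.1, ht.2, le_refl 1⟩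
    (bddBelow_Icc.mono inter_subset_right)

lemma gg_eq_inf (hK : GoodK f K) {t : ℝ} (ht : t ∈ Icc (0:ℝ) 1) :
    gg f K t = f (sInf (K ∩ Icc t 1)) := by
  by_cases htK : t ∈ K
  · have h1 : rho K t = t := rho_eq_self hK htK ht.1
    have h2 : sInf (K ∩ Icc t 1) = t :=
      le_antisymm (csInf_le (bddBelow_Icc.mono inter_subset_right) ⟨htK, le_refl t, ht.2⟩)
        (le_csInf ⟨1, hK.2.2.2.1, ht.2, le_refl 1⟩ fun _ hx => hx.2.1)
    rw [gg, h1, h2]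
  · exact hK.2.2.2.2 t ht htK

lemma gg_contOn (hf : Continuous f) (hK : GoodK f K) : ContinuousOn (gg f K) (Icc 0 1) := by
  rw [Metric.continuousOn_iff]
  intro b hb ε hε
  obtain ⟨δR, hδR, hR⟩ : ∃ δ > 0, ∀ u ∈ Icc (0:ℝ) 1, b ≤ u → u - b < δ →
      dist (gg f K u) (gg f K b) < ε := by
    set c := sInf (K ∩ Icc b 1) with hc
    have hcm : c ∈ K ∩ Icc b 1 := inf_mem hK hb
    have hgb : gg f K b = f c := gg_eq_inf hK hb
    obtain ⟨δ₁, hδ₁, hf₁⟩ := Metric.continuous_iff.mp hf c ε hε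
    refine ⟨δ₁, hδ₁, fun u hu hbu hub => ?_⟩
    rcases lt_or_ge u c with huc | huc
    · have hset : K ∩ Icc 0 u = K ∩ Icc 0 b := by
        apply Subset.antisymm
        · rintro k ⟨hk1, hk2, hk3⟩
          refine ⟨hk1, hk2, ?_⟩
          by_contra hkb
          push_neg at hkb
          have hck : c ≤ k := csInf_le (bddBelow_Icc.mono inter_subset_right)
            ⟨hk1, le_of_lt hkb, (hK.2.1 hk1).2⟩
          linarith
        · rintro k ⟨hk1, hk2, hk3⟩; exact ⟨hk1, hk2, hk3.trans hbu⟩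
      have : gg f K u = gg f K b := by rw [gg, gg, rho, rho, hset]
      rw [this]; simpa using hε
    · have h1 : c ≤ rho K u := le_csSup (bddAbove_Icc.mono inter_subset_right)
        ⟨hcm.1, le_trans hb.1 hcm.2.1, huc⟩
      have h2 : rho K u ≤ u := (rho_mem hK hu).2.2
      rw [hgb]
      refine hf₁ _ ?_
      rw [Real.dist_eq, abs_lt]
      constructor <;> linarith [hcm.2.1]
  obtain ⟨δL, hδL, hL⟩ : ∃ δ > 0, ∀ u ∈ Icc (0:ℝ) 1, u ≤ b → b - u < δ →
      dist (gg f K u) (gg f K b) < ε := by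
    set a := rho K b with ha
    have ham : a ∈ K ∩ Icc 0 b := rho_mem hK hb
    have hgb : gg f K b = f a := rfl
    obtain ⟨δ₁, hδ₁, hf₁⟩ := Metric.continuous_iff.mp hf a ε hε
    have hua : ∀ u ∈ Icc (0:ℝ) 1, a ≤ u → u ≤ b → gg f K u = gg f K b := by
      intro u hu hau hub
      have h1 : rho K u ≤ rho K b := rho_mono hK hu.1 hub
      have h2 : a ≤ rho K u := le_csSup (bddAbove_Icc.mono inter_subset_right)
        ⟨ham.1, ham.2.1, hau⟩
      have : rho K u = rho K b := le_antisymm h1 h2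
      rw [gg, gg, this]
    by_cases hKa : (K ∩ Ioo (a - δ₁) a).Nonempty
    · obtain ⟨k, hk1, hk2, hk3⟩ := hKa
      refine ⟨b - k, by linarith [ham.2.2], fun u hu hub hbu => ?_⟩
      rcases le_or_gt a u with hau | hua'
      · rw [hua u hu hau hub]; simpa using hε
      · have hku : k ≤ u := by linarith
        have h1 : k ≤ rho K u := le_csSup (bddAbove_Icc.mono inter_subset_right)
          ⟨hk1, (hK.2.1 hk1).1, hku⟩
        have h2 : rho K u ≤ u := (rho_mem hK hu).2.2
        rw [hgb]
        refine hf₁ _ ?_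
        rw [Real.dist_eq, abs_lt]
        constructor <;> linarith
    · by_cases ha0 : a ≤ 0
      · refine ⟨1, one_pos, fun u hu hub hbu => ?_⟩
        rw [hua u hu (le_trans ha0 hu.1) hub]; simpa using hε
      · push_neg at ha0
        have hsub : K ∩ Ico 0 a ⊆ Icc 0 (a - δ₁) := by
          rintro k ⟨hk1, hk2, hk3⟩
          refine ⟨hk2, ?_⟩
          by_contra h
          push_neg at h
          exact hKa ⟨k, hk1, h, hk3⟩
        have hda : 0 ≤ a - δ₁ := (hsub ⟨hK.2.2.1, le_refl 0, ha0⟩).2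
        set a' := sSup (K ∩ Icc 0 (a - δ₁)) with ha'
        have ha'm : a' ∈ K ∩ Icc 0 (a - δ₁) := (hK.1.inter isClosed_Icc).csSup_mem
          ⟨0, hK.2.2.1, le_refl 0, hda⟩ (bddAbove_Icc.mono inter_subset_right)
        have ha'a : a' < a := lt_of_le_of_lt ha'm.2.2 (by linarith)
        have hgap : ∀ k, k ∈ K → k ∈ Ioo a' a → False := by
          intro k hk1 hk2
          have hm : k ∈ Icc 0 (a - δ₁) := hsub ⟨hk1, (hK.2.1 hk1).1, hk2.2⟩
          have : k ≤ a' := le_csSup (bddAbove_Icc.mono inter_subset_right) ⟨hk1, hm⟩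
          linarith [hk2.1]
        have hfa' : f a' = f a := by
          set u' := (a' + a)/2 with hu'
          have hu'1 : a' < u' := by rw [hu']; linarith
          have hu'2 : u' < a := by rw [hu']; linarith
          have hu'I : u' ∈ Icc (0:ℝ) 1 :=
            ⟨by linarith [ha'm.2.1], by linarith [ham.2.2, hb.2]⟩
          have hu'K : u' ∉ K := fun h => hgap u' h ⟨hu'1, hu'2⟩
          have hQ := hK.2.2.2.2 u' hu'I hu'K
          have hsupe : sSup (K ∩ Icc 0 u') = a' := by
            apply le_antisymm
            · refine csSup_le ⟨a', ha'm.1, ha'm.2.1, le_of_lt hu'1⟩ ?_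
              rintro x ⟨hx1, hx2, hx3⟩
              by_contra hxa'
              push_neg at hxa'
              exact hgap x hx1 ⟨hxa', lt_of_le_of_lt hx3 hu'2⟩
            · exact le_csSup (bddAbove_Icc.mono inter_subset_right)
                ⟨ha'm.1, ha'm.2.1, le_of_lt hu'1⟩
          have hinfe : sInf (K ∩ Icc u' 1) = a := by
            apply le_antisymm
            · exact csInf_le (bddBelow_Icc.mono inter_subset_right)
                ⟨ham.1, le_of_lt hu'2, le_trans ham.2.2 hb.2⟩
            · refine le_csInf ⟨a, ham.1, le_of_lt hu'2, le_trans ham.2.2 hb.2⟩ ?_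
              rintro x ⟨hx1, hx2, hx3⟩
              by_contra hxa
              push_neg at hxa
              exact hgap x hx1 ⟨by linarith, hxa⟩
          rw [hsupe, hinfe] at hQ
          exact hQ
        refine ⟨b - a', by linarith [ham.2.2], fun u hu hub hbu => ?_⟩
        rcases le_or_gt a u with hau | hua'
        · rw [hua u hu hau hub]; simpa using hε
        · have hu'a : a' < u := by linarith
          have h1 : a' ≤ rho K u := le_csSup (bddAbove_Icc.mono inter_subset_right)
            ⟨ha'm.1, ha'm.2.1, le_of_lt hu'a⟩
          have h2 : rho K u ≤ u := (rho_mem hK hu).2.2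
          have h3 : rho K u = a' := by
            by_contra hne
            exact hgap (rho K u) (rho_mem hK hu).1
              ⟨lt_of_le_of_ne h1 (Ne.symm hne), lt_of_le_of_lt h2 hua'⟩
          show dist (f (rho K u)) (gg f K b) < ε
          rw [h3, hfa', hgb]
          simpa using hε
  refine ⟨min δL δR, lt_min hδL hδR, fun u hu hdist => ?_⟩
  rw [Real.dist_eq, abs_sub_lt_iff] at hdist
  rcases le_total u b with h | h
  · exact hL u hu h (lt_of_lt_of_le hdist.2 (min_le_left _ _))
  · exact hR u hu h (lt_of_lt_of_le hdist.1 (min_le_right _ _))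

lemma gg_interval_fibers (hK : GoodK f K)
    (hmin : ∀ K', GoodK f K' → K' ⊆ K → K' = K)
    {s t u : ℝ} (hs : s ∈ Icc (0:ℝ) 1) (ht : t ∈ Icc (0:ℝ) 1)
    (hsu : s ≤ u) (hut : u ≤ t) (hst : gg f K s = gg f K t) :
    gg f K u = gg f K s := by
  set a := rho K s with ha
  have ham : a ∈ K ∩ Icc 0 s := rho_mem hK hs
  set c := sInf (K ∩ Icc t 1) with hc
  have hcm : c ∈ K ∩ Icc t 1 := inf_mem hK ht
  have hfa : gg f K s = f a := rfl
  have hfc : gg f K t = f c := gg_eq_inf hK ht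
  have hac : f a = f c := by rw [← hfa, ← hfc]; exact hst
  have hu : u ∈ Icc (0:ℝ) 1 := ⟨le_trans hs.1 hsu, le_trans hut ht.2⟩
  have hsc : s ≤ c := le_trans (le_trans hsu hut) hcm.2.1
  have has : a ≤ s := ham.2.2
  by_cases hKac : (K ∩ Ioo a c).Nonempty
  · exfalso
    set K' := K \ Ioo a c with hK'd
    have h0K' : (0:ℝ) ∈ K' := ⟨hK.2.2.1, fun h => absurd h.1 (not_lt.2 ham.2.1)⟩
    have h1K' : (1:ℝ) ∈ K' := ⟨hK.2.2.2.1, fun h => absurd h.2 (not_lt.2 hcm.2.2)⟩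
    have hgood' : GoodK f K' := by
      refine ⟨hK.1.sdiff isOpen_Ioo, fun x hx => hK.2.1 hx.1, h0K', h1K', ?_⟩
      intro t' ht' ht'K
      by_cases ht'm : t' ∈ Ioo a c
      · have hsupe : sSup (K' ∩ Icc 0 t') = a := by
          apply le_antisymm
          · refine csSup_le ⟨a, ⟨ham.1, fun h => lt_irrefl a h.1⟩, ham.2.1, le_of_lt ht'm.1⟩ ?_
            rintro x ⟨⟨hx1, hx2⟩, _, hx4⟩
            by_contra hxa
            push_neg at hxa
            exact hx2 ⟨hxa, lt_of_le_of_lt hx4 ht'm.2⟩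
          · exact le_csSup (bddAbove_Icc.mono inter_subset_right)
              ⟨⟨ham.1, fun h => lt_irrefl a h.1⟩, ham.2.1, le_of_lt ht'm.1⟩
        have hinfe : sInf (K' ∩ Icc t' 1) = c := by
          apply le_antisymm
          · exact csInf_le (bddBelow_Icc.mono inter_subset_right)
              ⟨⟨hcm.1, fun h => lt_irrefl c h.2⟩, le_of_lt ht'm.2, hcm.2.2⟩
          · refine le_csInf ⟨c, ⟨hcm.1, fun h => lt_irrefl c h.2⟩, le_of_lt ht'm.2, hcm.2.2⟩ ?_
            rintro x ⟨⟨hx1, hx2⟩, hx3, _⟩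
            by_contra hxc
            push_neg at hxc
            exact hx2 ⟨lt_of_lt_of_le ht'm.1 hx3, hxc⟩
        rw [hsupe, hinfe]; exact hac
      · have ht'Knot : t' ∉ K := fun h => ht'K ⟨h, ht'm⟩
        have hQ := hK.2.2.2.2 t' ht' ht'Knot
        have htac : t' < a ∨ c < t' := by
          by_contra hcon
          push_neg at hcon
          apply ht'm
          constructor
          · rcases lt_or_eq_of_le hcon.1 with h | h
            · exact h
            · exact absurd (h ▸ ham.1) ht'Knot
          · rcases lt_or_eq_of_le hcon.2 with h | h
            · exact h
            · exact absurd (h ▸ hcm.1) ht'Knot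
        rcases htac with h | h
        · have e1 : K' ∩ Icc 0 t' = K ∩ Icc 0 t' := by
            ext k
            constructor
            · rintro ⟨⟨hk1, _⟩, hk2⟩; exact ⟨hk1, hk2⟩
            · rintro ⟨hk1, hk2⟩
              exact ⟨⟨hk1, fun hm => absurd (lt_of_lt_of_le hm.1 hk2.2) (not_lt.2 (le_of_lt h))⟩, hk2⟩
          have e2 : sInf (K' ∩ Icc t' 1) = sInf (K ∩ Icc t' 1) := by
            set i := sInf (K ∩ Icc t' 1) with hi
            have him : i ∈ K ∩ Icc t' 1 := inf_mem hK ht'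
            have hia : i ≤ a := csInf_le (bddBelow_Icc.mono inter_subset_right)
              ⟨ham.1, le_of_lt h, le_trans ham.2.2 hs.2⟩
            have hiK' : i ∈ K' := ⟨him.1, fun hm => absurd hm.1 (not_lt.2 hia)⟩
            apply le_antisymm
            · exact csInf_le (bddBelow_Icc.mono inter_subset_right) ⟨hiK', him.2⟩
            · exact csInf_le_csInf (bddBelow_Icc.mono inter_subset_right)
                ⟨i, hiK', him.2⟩ (inter_subset_inter_left _ diff_subset)
          rw [e1, e2]; exact hQ
        · have e1 : K' ∩ Icc t' 1 = K ∩ Icc t' 1 := by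
            ext k
            constructor
            · rintro ⟨⟨hk1, _⟩, hk2⟩; exact ⟨hk1, hk2⟩
            · rintro ⟨hk1, hk2⟩
              exact ⟨⟨hk1, fun hm => absurd (lt_of_le_of_lt hk2.1 hm.2) (not_lt.2 (le_of_lt h))⟩, hk2⟩
          have e2 : sSup (K' ∩ Icc 0 t') = sSup (K ∩ Icc 0 t') := by
            have hjm : rho K t' ∈ K ∩ Icc 0 t' := rho_mem hK ht'
            have hjc : c ≤ rho K t' := le_csSup (bddAbove_Icc.mono inter_subset_right)
              ⟨hcm.1, le_trans ht.1 hcm.2.1, le_of_lt h⟩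
            have hjK' : rho K t' ∈ K' := ⟨hjm.1, fun hm => absurd hm.2 (not_lt.2 hjc)⟩
            apply le_antisymm
            · exact csSup_le_csSup (bddAbove_Icc.mono inter_subset_right)
                ⟨rho K t', hjK', hjm.2⟩ (inter_subset_inter_left _ diff_subset)
            · exact le_csSup (bddAbove_Icc.mono inter_subset_right) ⟨hjK', hjm.2⟩
          rw [e1, e2]; exact hQ
    have hKK : K' = K := hmin K' hgood' diff_subset
    obtain ⟨k, hkK, hkm⟩ := hKac
    rw [← hKK] at hkK
    exact hkK.2 hkm
  · rcases lt_or_ge u c with huc | huc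
    · have h1 : a ≤ rho K u := le_csSup (bddAbove_Icc.mono inter_subset_right)
        ⟨ham.1, ham.2.1, le_trans ham.2.2 hsu⟩
      have h2 : rho K u ≤ u := (rho_mem hK hu).2.2
      have h3 : rho K u = a := by
        by_contra hne
        exact hKac ⟨rho K u, (rho_mem hK hu).1,
          lt_of_le_of_ne h1 (Ne.symm hne), lt_of_le_of_lt h2 huc⟩
      show f (rho K u) = gg f K s
      rw [h3]; exact hfa.symm
    · have hutc : u = t := le_antisymm hut (le_trans hcm.2.1 huc)
      rw [hutc]; exact hst.symm



section Fibers

variable (g : ℝ → ℝ × ℝ)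

def fib (t : ℝ) : Set ℝ := {u | u ∈ Icc (0:ℝ) 1 ∧ g u = g t}
def fA (t : ℝ) : ℝ := sInf (fib g t)
def fB (t : ℝ) : ℝ := sSup (fib g t)
def Dst : Set ℝ :=
  {x | ∃ r : ℚ, (r:ℝ) ∈ Icc (0:ℝ) 1 ∧ g r ≠ g 0 ∧ g r ≠ g 1 ∧ x = fA g (r:ℝ)}

variable {g}

lemma fib_subset (t : ℝ) : fib g t ⊆ Icc 0 1 := fun _ hu => hu.1

lemma fib_closed (hg : ContinuousOn g (Icc 0 1)) (t : ℝ) : IsClosed (fib g t) := by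
  have : fib g t = Icc 0 1 ∩ g ⁻¹' {g t} := by
    ext u; simp [fib, mem_preimage, and_comm]
  rw [this]
  exact hg.preimage_isClosed_of_isClosed isClosed_Icc isClosed_singleton

lemma self_mem_fib {t : ℝ} (ht : t ∈ Icc (0:ℝ) 1) : t ∈ fib g t := ⟨ht, rfl⟩

lemma fA_mem (hg : ContinuousOn g (Icc 0 1)) {t : ℝ} (ht : t ∈ Icc (0:ℝ) 1) : fA g t ∈ fib g t :=
  (fib_closed hg t).csInf_mem ⟨t, self_mem_fib ht⟩ (bddBelow_Icc.mono (fib_subset t))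

lemma fB_mem (hg : ContinuousOn g (Icc 0 1)) {t : ℝ} (ht : t ∈ Icc (0:ℝ) 1) : fB g t ∈ fib g t :=
  (fib_closed hg t).csSup_mem ⟨t, self_mem_fib ht⟩ (bddAbove_Icc.mono (fib_subset t))

lemma fA_le (hg : ContinuousOn g (Icc 0 1)) {t : ℝ} (ht : t ∈ Icc (0:ℝ) 1) : fA g t ≤ t :=
  csInf_le (bddBelow_Icc.mono (fib_subset t)) (self_mem_fib ht)

lemma le_fB (hg : ContinuousOn g (Icc 0 1)) {t : ℝ} (ht : t ∈ Icc (0:ℝ) 1) : t ≤ fB g t :=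
  le_csSup (bddAbove_Icc.mono (fib_subset t)) (self_mem_fib ht)

lemma fA_le_of_mem {t x : ℝ} (hx : x ∈ fib g t) : fA g t ≤ x :=
  csInf_le (bddBelow_Icc.mono (fib_subset t)) hx

lemma le_fB_of_mem {t x : ℝ} (hx : x ∈ fib g t) : x ≤ fB g t :=
  le_csSup (bddAbove_Icc.mono (fib_subset t)) hx

lemma mem_fib_of_between (hfib : ∀ s t u : ℝ, s ∈ Icc (0:ℝ) 1 → t ∈ Icc (0:ℝ) 1 → s ≤ u → u ≤ t →
      g s = g t → g u = g s) {t x y u : ℝ} (hx : x ∈ fib g t) (hy : y ∈ fib g t)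
    (hxu : x ≤ u) (huy : u ≤ y) : u ∈ fib g t := by
  have huI : u ∈ Icc (0:ℝ) 1 := ⟨le_trans hx.1.1 hxu, le_trans huy hy.1.2⟩
  have hxy : g x = g y := by rw [hx.2, hy.2]
  have := hfib x y u hx.1 hy.1 hxu huy hxy
  exact ⟨huI, by rw [this, hx.2]⟩

lemma fib_eq {s t : ℝ} (h : g s = g t) : fib g s = fib g t := by
  ext u; simp only [fib, mem_setOf_eq, h]

lemma gfA (hg : ContinuousOn g (Icc 0 1)) {t : ℝ} (ht : t ∈ Icc (0:ℝ) 1) : g (fA g t) = g t := (fA_mem hg ht).2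

lemma gfB (hg : ContinuousOn g (Icc 0 1)) {t : ℝ} (ht : t ∈ Icc (0:ℝ) 1) : g (fB g t) = g t := (fB_mem hg ht).2

lemma fA_idem (hg : ContinuousOn g (Icc 0 1)) {t : ℝ} (ht : t ∈ Icc (0:ℝ) 1) : fA g (fA g t) = fA g t := by
  show sInf (fib g (fA g t)) = fA g t
  rw [fib_eq (gfA hg ht)]
  rfl

lemma fB_fA (hg : ContinuousOn g (Icc 0 1)) {t : ℝ} (ht : t ∈ Icc (0:ℝ) 1) : fB g (fA g t) = fB g t := by
  show sSup (fib g (fA g t)) = fB g t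
  rw [fib_eq (gfA hg ht)]
  rfl

lemma fA_eq_of_g_eq {s t : ℝ} (h : g s = g t) : fA g s = fA g t := by
  unfold fA; rw [fib_eq h]

lemma fB_lt_fA (hg : ContinuousOn g (Icc 0 1))
    (hfib : ∀ s t u : ℝ, s ∈ Icc (0:ℝ) 1 → t ∈ Icc (0:ℝ) 1 → s ≤ u → u ≤ t →
      g s = g t → g u = g s)
    {s t : ℝ} (hs : s ∈ Icc (0:ℝ) 1) (ht : t ∈ Icc (0:ℝ) 1)
    (h : fA g s < fA g t) : fB g s < fA g t := by
  by_contra h'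
  push_neg at h'
  have hmem : fA g t ∈ fib g s :=
    mem_fib_of_between hfib (fA_mem hg hs) (fB_mem hg hs) (le_of_lt h) h'
  have : g t = g s := by rw [← gfA hg ht]; exact hmem.2
  exact absurd (fA_eq_of_g_eq this) (ne_of_gt h)

lemma fA_mono (hg : ContinuousOn g (Icc 0 1))
    (hfib : ∀ s t u : ℝ, s ∈ Icc (0:ℝ) 1 → t ∈ Icc (0:ℝ) 1 → s ≤ u → u ≤ t →
      g s = g t → g u = g s)
    {s t : ℝ} (hs : s ∈ Icc (0:ℝ) 1) (ht : t ∈ Icc (0:ℝ) 1) (hst : s ≤ t) :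
    fA g s ≤ fA g t := by
  by_contra h
  push_neg at h
  have := fB_lt_fA hg hfib ht hs h
  have h1 := fA_le hg hs
  have h2 := le_fB hg ht
  linarith

lemma fB_mono (hg : ContinuousOn g (Icc 0 1))
    (hfib : ∀ s t u : ℝ, s ∈ Icc (0:ℝ) 1 → t ∈ Icc (0:ℝ) 1 → s ≤ u → u ≤ t →
      g s = g t → g u = g s)
    {s t : ℝ} (hs : s ∈ Icc (0:ℝ) 1) (ht : t ∈ Icc (0:ℝ) 1) (hst : s ≤ t) :
    fB g s ≤ fB g t := by
  rcases lt_trichotomy (fA g s) (fA g t) with h | h | h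
  · have h1 := fB_lt_fA hg hfib hs ht h
    have h2 := le_fB hg ht
    linarith [fA_le hg ht]
  · have : fB g s = fB g t := by
      unfold fB
      rw [fib_eq (show g s = g t by rw [← gfA hg hs, ← gfA hg ht, h])]
    linarith [this.le]
  · have h1 := fB_lt_fA hg hfib ht hs h
    have h2 := fA_le hg hs
    have h3 := le_fB hg ht
    linarith

lemma fA_le_fB (hg : ContinuousOn g (Icc 0 1)) {t : ℝ} (ht : t ∈ Icc (0:ℝ) 1) : fA g t ≤ fB g t :=
  le_fB_of_mem (fA_mem hg ht)

lemma fA_zero (hg : ContinuousOn g (Icc 0 1)) : fA g 0 = 0 :=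
  le_antisymm (fA_le hg (left_mem_Icc.2 zero_le_one)) (fA_mem hg (left_mem_Icc.2 zero_le_one)).1.1

lemma exists_rat_between (hg : ContinuousOn g (Icc 0 1))
    (hfib : ∀ s t u : ℝ, s ∈ Icc (0:ℝ) 1 → t ∈ Icc (0:ℝ) 1 → s ≤ u → u ≤ t →
      g s = g t → g u = g s)
    {s t : ℝ} (hs : s ∈ Icc (0:ℝ) 1) (ht : t ∈ Icc (0:ℝ) 1)
    (h : fB g s < fA g t) :
    ∃ r : ℚ, (r:ℝ) ∈ Icc (0:ℝ) 1 ∧ fB g s < fA g (r:ℝ) ∧ fB g (r:ℝ) < fA g t := by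
  obtain ⟨r, hr1, hr2⟩ := exists_rat_btwn h
  have hrI : (r:ℝ) ∈ Icc (0:ℝ) 1 :=
    ⟨le_trans (fB_mem hg hs).1.1 (le_of_lt hr1), le_trans (le_of_lt hr2) (fA_mem hg ht).1.2⟩
  refine ⟨r, hrI, ?_, ?_⟩
  · by_contra h'
    push_neg at h'
    have h1 : fB g s ∈ fib g (r:ℝ) :=
      mem_fib_of_between hfib (fA_mem hg hrI) (fB_mem hg hrI) h'
        (le_trans (le_of_lt hr1) (le_fB hg hrI))
    have h2 : g (r:ℝ) = g s := by rw [← h1.2, gfB hg hs]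
    have h3 : (r:ℝ) ∈ fib g s := by rw [← fib_eq h2]; exact self_mem_fib hrI
    have := le_fB_of_mem h3
    linarith
  · by_contra h'
    push_neg at h'
    have h1 : fA g t ∈ fib g (r:ℝ) :=
      mem_fib_of_between hfib (fA_mem hg hrI) (fB_mem hg hrI)
        (le_trans (fA_le hg hrI) (le_of_lt hr2)) h'
    have h2 : g (r:ℝ) = g t := by rw [← h1.2, gfA hg ht]
    have h3 : (r:ℝ) ∈ fib g t := by rw [← fib_eq h2]; exact self_mem_fib hrI
    have := fA_le_of_mem h3
    linarith

lemma Dst_spec (hg : ContinuousOn g (Icc 0 1))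
    (hfib : ∀ s t u : ℝ, s ∈ Icc (0:ℝ) 1 → t ∈ Icc (0:ℝ) 1 → s ≤ u → u ≤ t →
      g s = g t → g u = g s)
    {x : ℝ} (hx : x ∈ Dst g) :
    x ∈ Icc (0:ℝ) 1 ∧ fA g x = x ∧ fB g 0 < x ∧ fB g x < fA g 1 := by
  obtain ⟨r, hrI, hr0, hr1, rfl⟩ := hx
  have h0I : (0:ℝ) ∈ Icc (0:ℝ) 1 := left_mem_Icc.2 zero_le_one
  have h1I : (1:ℝ) ∈ Icc (0:ℝ) 1 := right_mem_Icc.2 zero_le_one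
  have hAr : fA g (r:ℝ) ∈ Icc (0:ℝ) 1 := (fA_mem hg hrI).1
  have hA0 : fA g 0 < fA g (r:ℝ) := by
    have hle : fA g 0 ≤ fA g (r:ℝ) := by rw [fA_zero hg]; exact hAr.1
    rcases lt_or_eq_of_le hle with h | h
    · exact h
    · exfalso
      apply hr0
      rw [← gfA hg hrI, ← h, fA_zero hg]
  have hA1 : fA g (r:ℝ) < fA g 1 := by
    rcases lt_or_eq_of_le (fA_mono hg hfib hrI h1I hrI.2) with h | h
    · exact h
    · exfalso
      apply hr1
      rw [← gfA hg hrI, h, gfA hg h1I]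
  exact ⟨hAr, fA_idem hg hrI, fB_lt_fA hg hfib h0I hrI hA0, fB_fA hg hrI ▸ fB_lt_fA hg hfib hrI h1I hA1⟩

lemma Dst_mem_of (hg : ContinuousOn g (Icc 0 1))
    {r : ℚ} (hrI : (r:ℝ) ∈ Icc (0:ℝ) 1)
    (h0 : fB g 0 < fA g (r:ℝ)) (h1 : fB g (r:ℝ) < fA g 1) : fA g (r:ℝ) ∈ Dst g := by
  have h0I : (0:ℝ) ∈ Icc (0:ℝ) 1 := left_mem_Icc.2 zero_le_one
  have h1I : (1:ℝ) ∈ Icc (0:ℝ) 1 := right_mem_Icc.2 zero_le_one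
  refine ⟨r, hrI, ?_, ?_, rfl⟩
  · intro h
    have := fA_eq_of_g_eq (g := g) h
    rw [fA_zero hg] at this
    have h2 : fA g (r:ℝ) ≤ fB g 0 := by
      rw [this]
      exact (fB_mem hg h0I).1.1
    linarith
  · intro h
    have := fA_eq_of_g_eq (g := g) h
    have h2 := fA_le_fB hg hrI
    linarith [this ▸ h1]

end Fibers


lemma exists_arc_param (g : ℝ → ℝ × ℝ) (hg : ContinuousOn g (Icc 0 1))
    (hfib : ∀ s t u : ℝ, s ∈ Icc (0:ℝ) 1 → t ∈ Icc (0:ℝ) 1 → s ≤ u → u ≤ t →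
      g s = g t → g u = g s)
    (hne01 : g 0 ≠ g 1) :
    ∃ φ : ℝ → ℝ × ℝ, ContinuousOn φ (Icc 0 1) ∧ InjOn φ (Icc 0 1) ∧
      φ 0 = g 0 ∧ φ 1 = g 1 ∧ φ '' Icc 0 1 = g '' Icc 0 1 := by
  have h0I : (0:ℝ) ∈ Icc (0:ℝ) 1 := left_mem_Icc.2 zero_le_one
  have h1I : (1:ℝ) ∈ Icc (0:ℝ) 1 := right_mem_Icc.2 zero_le_one
  have hB0A1 : fB g 0 < fA g 1 := by
    have h01 : fA g 0 < fA g 1 := by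
      have hle : fA g 0 ≤ fA g 1 := fA_mono hg hfib h0I h1I zero_le_one
      rcases lt_or_eq_of_le hle with h | h
      · exact h
      · exact absurd (by rw [← gfA hg h0I, h, gfA hg h1I]) hne01
    exact fB_lt_fA hg hfib h0I h1I h01
  haveI hcount : Countable ↥(Dst g) := by
    apply Set.Countable.to_subtype
    apply Set.Countable.mono _ (countable_range fun r : ℚ => fA g (r:ℝ))
    rintro x ⟨r, _, _, _, rfl⟩
    exact ⟨r, rfl⟩
  haveI hnon : Nonempty ↥(Dst g) := by
    obtain ⟨r, hrI, h1, h2⟩ := exists_rat_between hg hfib h0I h1I hB0A1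
    exact ⟨⟨fA g (r:ℝ), Dst_mem_of hg hrI h1 h2⟩⟩
  haveI hdense : DenselyOrdered ↥(Dst g) := by
    constructor
    rintro ⟨a, ha⟩ ⟨b, hb⟩ hab
    rw [Subtype.mk_lt_mk] at hab
    obtain ⟨haI, haA, ha0, ha1⟩ := Dst_spec hg hfib ha
    obtain ⟨hbI, hbA, hb0, hb1⟩ := Dst_spec hg hfib hb
    have h1 : fA g a < fA g b := by rw [haA, hbA]; exact hab
    have h2 : fB g a < fA g b := fB_lt_fA hg hfib haI hbI h1
    obtain ⟨r, hrI, hr1, hr2⟩ := exists_rat_between hg hfib haI hbI h2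
    have hmem : fA g (r:ℝ) ∈ Dst g := by
      apply Dst_mem_of hg hrI
      · have h3 : fA g a ≤ fB g a := fA_le_fB hg haI
        linarith
      · have h3 : fA g b ≤ fB g b := fA_le_fB hg hbI
        linarith
    refine ⟨⟨fA g (r:ℝ), hmem⟩, ?_, ?_⟩ <;> rw [Subtype.mk_lt_mk]
    · have h3 : fA g a ≤ fB g a := fA_le_fB hg haI
      linarith
    · have h3 : fA g (r:ℝ) ≤ fB g (r:ℝ) := fA_le_fB hg hrI
      linarith
  haveI hnomin : NoMinOrder ↥(Dst g) := by
    constructor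
    rintro ⟨a, ha⟩
    obtain ⟨haI, haA, ha0, ha1⟩ := Dst_spec hg hfib ha
    have h2 : fB g 0 < fA g a := by rw [haA]; exact ha0
    obtain ⟨r, hrI, hr1, hr2⟩ := exists_rat_between hg hfib h0I haI h2
    have hmem : fA g (r:ℝ) ∈ Dst g := by
      apply Dst_mem_of hg hrI hr1
      have h3 : fA g a ≤ fB g a := fA_le_fB hg haI
      linarith
    refine ⟨⟨fA g (r:ℝ), hmem⟩, ?_⟩
    rw [Subtype.mk_lt_mk]
    have h3 : fA g (r:ℝ) ≤ fB g (r:ℝ) := fA_le_fB hg hrI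
    linarith
  haveI hnomax : NoMaxOrder ↥(Dst g) := by
    constructor
    rintro ⟨a, ha⟩
    obtain ⟨haI, haA, ha0, ha1⟩ := Dst_spec hg hfib ha
    have h2 : fB g a < fA g 1 := ha1
    obtain ⟨r, hrI, hr1, hr2⟩ := exists_rat_between hg hfib haI h1I h2
    have hmem : fA g (r:ℝ) ∈ Dst g := by
      apply Dst_mem_of hg hrI _ hr2
      have h3 : fA g a ≤ fB g a := fA_le_fB hg haI
      linarith
    refine ⟨⟨fA g (r:ℝ), hmem⟩, ?_⟩
    rw [Subtype.mk_lt_mk]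
    have h3 : fA g a ≤ fB g a := fA_le_fB hg haI
    linarith
  obtain ⟨θ⟩ := Order.iso_of_countable_dense (α := ↥(Dst g)) (β := ℚ)
  set e : ℚ → ℝ := fun p => ((orderIsoIooNegOneOne ℝ (p:ℝ)) : ℝ) with he
  have he_mem : ∀ p : ℚ, e p ∈ Ioo (-1:ℝ) 1 := fun p => (orderIsoIooNegOneOne ℝ (p:ℝ)).2
  have he_mono : StrictMono e := by
    intro p p' h
    have hpp : ((p:ℝ)) < ((p':ℝ)) := by exact_mod_cast h
    exact Subtype.coe_lt_coe.2 ((orderIsoIooNegOneOne ℝ).strictMono hpp)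
  set σ : ↥(Dst g) → ℝ := fun d => (e (θ d) + 1)/2 with hσ
  have hσ_mono : StrictMono σ := by
    intro d d' h
    have := he_mono (θ.strictMono h)
    simp only [hσ]
    linarith
  have hσ_mem : ∀ d, σ d ∈ Ioo (0:ℝ) 1 := by
    intro d
    obtain ⟨h1, h2⟩ := he_mem (θ d)
    constructor
    · simp only [hσ]; linarith
    · simp only [hσ]; linarith
  have hσ_dense : ∀ x y : ℝ, 0 ≤ x → y ≤ 1 → x < y → ∃ d, x < σ d ∧ σ d < y := by
    intro x y hx hy hxy
    set a := max (2*x - 1) (-1 : ℝ) with hadef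
    set b := 2*y - 1 with hbdef
    have hab : a < b := by
      apply max_lt
      · simp only [hbdef]; linarith
      · simp only [hbdef]; linarith
    obtain ⟨z₁, hz₁a, hz₁b⟩ := exists_between hab
    obtain ⟨z₂, hz₂a, hz₂b⟩ := exists_between hz₁b
    have hb1 : b ≤ 1 := by simp only [hbdef]; linarith
    have hz₁I : z₁ ∈ Ioo (-1:ℝ) 1 :=
      ⟨lt_of_le_of_lt (le_max_right _ _) hz₁a, by linarith⟩
    have hz₂I : z₂ ∈ Ioo (-1:ℝ) 1 := ⟨lt_trans hz₁I.1 hz₂a, by linarith⟩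
    have hlt : (orderIsoIooNegOneOne ℝ).symm ⟨z₁, hz₁I⟩ <
        (orderIsoIooNegOneOne ℝ).symm ⟨z₂, hz₂I⟩ :=
      (orderIsoIooNegOneOne ℝ).symm.strictMono (Subtype.mk_lt_mk.2 hz₂a)
    obtain ⟨p, hp1, hp2⟩ := exists_rat_btwn hlt
    have hep1 : z₁ < e p := by
      have h := (orderIsoIooNegOneOne ℝ).strictMono hp1
      rw [OrderIso.apply_symm_apply] at h
      exact Subtype.coe_lt_coe.2 h
    have hep2 : e p < z₂ := by
      have h := (orderIsoIooNegOneOne ℝ).strictMono hp2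
      rw [OrderIso.apply_symm_apply] at h
      exact Subtype.coe_lt_coe.2 h
    refine ⟨θ.symm p, ?_, ?_⟩
    · have hθ : θ (θ.symm p) = p := θ.apply_symm_apply p
      simp only [hσ, hθ]
      have ha1 : 2*x - 1 ≤ a := le_max_left _ _
      linarith
    · have hθ : θ (θ.symm p) = p := θ.apply_symm_apply p
      simp only [hσ, hθ]
      have : z₂ < b := hz₂b
      simp only [hbdef] at this
      linarith
  set q : ℝ → ℝ := fun t =>
    sSup (insert 0 {x | ∃ d : ↥(Dst g), (d:ℝ) < fA g t ∧ σ d = x}) with hqdef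
  have hqbdd : ∀ t, BddAbove (insert (0:ℝ) {x | ∃ d : ↥(Dst g), (d:ℝ) < fA g t ∧ σ d = x}) := by
    intro t
    refine ⟨1, fun x hx => ?_⟩
    rcases mem_insert_iff.1 hx with rfl | ⟨d, _, rfl⟩
    · exact zero_le_one
    · exact le_of_lt (hσ_mem d).2
  have hq0le : ∀ t, 0 ≤ q t := fun t => le_csSup (hqbdd t) (mem_insert _ _)
  have hqle1 : ∀ t, q t ≤ 1 := by
    intro t
    apply csSup_le ⟨0, mem_insert _ _⟩
    intro x hx
    rcases mem_insert_iff.1 hx with rfl | ⟨d, _, rfl⟩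
    · exact zero_le_one
    · exact le_of_lt (hσ_mem d).2
  have hq_mono : ∀ s t, s ∈ Icc (0:ℝ) 1 → t ∈ Icc (0:ℝ) 1 → s ≤ t → q s ≤ q t := by
    intro s t hs ht hst
    apply csSup_le_csSup (hqbdd t) ⟨0, mem_insert _ _⟩
    intro x hx
    rcases mem_insert_iff.1 hx with rfl | ⟨d, hd, rfl⟩
    · exact mem_insert _ _
    · exact mem_insert_of_mem _ ⟨d, lt_of_lt_of_le hd (fA_mono hg hfib hs ht hst), rfl⟩
  have hq_gEq : ∀ s t : ℝ, g s = g t → q s = q t := by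
    intro s t h
    have hA : fA g s = fA g t := fA_eq_of_g_eq h
    simp only [hqdef, hA]
  have hσ_le_q : ∀ t, t ∈ Icc (0:ℝ) 1 → ∀ d : ↥(Dst g), (d:ℝ) = fA g t → σ d ≤ q t := by
    intro t ht d hd
    by_contra hcon
    push_neg at hcon
    obtain ⟨d', h1, h2⟩ := hσ_dense (q t) (σ d) (hq0le t) (le_of_lt (hσ_mem d).2) hcon
    have hdd : d' < d := hσ_mono.lt_iff_lt.1 h2
    have hlt : (d':ℝ) < fA g t := hd ▸ Subtype.coe_lt_coe.2 hdd
    have : σ d' ≤ q t := le_csSup (hqbdd t) (mem_insert_of_mem _ ⟨d', hlt, rfl⟩)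
    linarith
  have hq_lt : ∀ s t, s ∈ Icc (0:ℝ) 1 → t ∈ Icc (0:ℝ) 1 → fA g s < fA g t → q s < q t := by
    intro s t hs ht hA
    have hBA : fB g s < fA g t := fB_lt_fA hg hfib hs ht hA
    obtain ⟨r, hrI, hr1, hr2⟩ := exists_rat_between hg hfib hs ht hBA
    obtain ⟨r', hr'I, hr'1, hr'2⟩ := exists_rat_between hg hfib hrI ht hr2
    have hd₁ : fA g (r:ℝ) ∈ Dst g := by
      apply Dst_mem_of hg hrI
      · exact lt_of_le_of_lt (fB_mono hg hfib h0I hs hs.1) hr1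
      · exact lt_of_lt_of_le hr2 (fA_mono hg hfib ht h1I ht.2)
    have hd₂ : fA g (r':ℝ) ∈ Dst g := by
      apply Dst_mem_of hg hr'I
      · have h3 : fA g (r:ℝ) ≤ fB g (r:ℝ) := fA_le_fB hg hrI
        have h4 : fB g 0 ≤ fB g s := fB_mono hg hfib h0I hs hs.1
        linarith
      · exact lt_of_lt_of_le hr'2 (fA_mono hg hfib ht h1I ht.2)
    have hqs : q s ≤ σ ⟨fA g (r:ℝ), hd₁⟩ := by
      apply csSup_le ⟨0, mem_insert _ _⟩
      intro x hx
      rcases mem_insert_iff.1 hx with rfl | ⟨d, hd, rfl⟩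
      · exact le_of_lt (hσ_mem _).1
      · have h3 : fA g s ≤ fB g s := fA_le_fB hg hs
        have hlt : d < (⟨fA g (r:ℝ), hd₁⟩ : ↥(Dst g)) := by
          apply Subtype.coe_lt_coe.1
          show (d:ℝ) < fA g (r:ℝ)
          linarith
        exact le_of_lt (hσ_mono hlt)
    have hqt : σ (⟨fA g (r':ℝ), hd₂⟩ : ↥(Dst g)) ≤ q t := by
      apply le_csSup (hqbdd t)
      apply mem_insert_of_mem
      exact ⟨⟨fA g (r':ℝ), hd₂⟩, lt_of_le_of_lt (fA_le_fB hg hr'I) hr'2, rfl⟩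
    have hmid : σ (⟨fA g (r:ℝ), hd₁⟩ : ↥(Dst g)) < σ (⟨fA g (r':ℝ), hd₂⟩ : ↥(Dst g)) := by
      apply hσ_mono
      apply Subtype.mk_lt_mk.2
      exact lt_of_le_of_lt (fA_le_fB hg hrI) hr'1
    linarith
  have hq_injfib : ∀ s t, s ∈ Icc (0:ℝ) 1 → t ∈ Icc (0:ℝ) 1 → q s = q t → g s = g t := by
    intro s t hs ht hq
    by_contra hne
    rcases lt_trichotomy (fA g s) (fA g t) with h | h | h
    · exact absurd hq (ne_of_lt (hq_lt s t hs ht h))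
    · exact hne (by rw [← gfA hg hs, ← gfA hg ht, h])
    · exact absurd hq.symm (ne_of_lt (hq_lt t s ht hs h))
  have hq0 : q 0 = 0 := by
    apply le_antisymm _ (hq0le 0)
    apply csSup_le ⟨0, mem_insert _ _⟩
    intro x hx
    rcases mem_insert_iff.1 hx with rfl | ⟨d, hd, rfl⟩
    · exact le_refl 0
    · exfalso
      rw [fA_zero hg] at hd
      exact absurd hd (not_lt.2 (Dst_spec hg hfib d.2).1.1)
  have hq1 : q 1 = 1 := by
    apply le_antisymm (hqle1 1)
    by_contra hcon
    push_neg at hcon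
    obtain ⟨d, hd1, hd2⟩ := hσ_dense (q 1) 1 (hq0le 1) (le_refl 1) hcon
    have hd3 : (d:ℝ) < fA g 1 := by
      obtain ⟨hdI, hdA, hd0, hd4⟩ := Dst_spec hg hfib d.2
      have := fA_le_fB hg hdI
      linarith
    have : σ d ≤ q 1 := le_csSup (hqbdd 1) (mem_insert_of_mem _ ⟨d, hd3, rfl⟩)
    linarith
  have hq_right : ∀ t ∈ Icc (0:ℝ) 1, ∀ ε > (0:ℝ), ∃ δ > (0:ℝ), ∀ u ∈ Icc (0:ℝ) 1,
      t ≤ u → u - t < δ → q u < q t + ε := by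
    intro t ht ε hε
    by_cases h1 : 1 < q t + ε
    · exact ⟨1, one_pos, fun u hu _ _ => lt_of_le_of_lt (hqle1 u) h1⟩
    · push_neg at h1
      obtain ⟨d, hd1, hd2⟩ := hσ_dense (q t) (q t + ε) (hq0le t) h1 (by linarith)
      have hdabove : fB g t < (d:ℝ) := by
        by_contra hcon
        push_neg at hcon
        rcases lt_or_ge ((d:ℝ)) (fA g t) with h | h
        · have : σ d ≤ q t := le_csSup (hqbdd t) (mem_insert_of_mem _ ⟨d, h, rfl⟩)
          linarith
        · have hdfib : (d:ℝ) ∈ fib g t :=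
            mem_fib_of_between hfib (fA_mem hg ht) (fB_mem hg ht) h hcon
          have hAA : fA g ((d:ℝ)) = fA g t := fA_eq_of_g_eq hdfib.2
          have hdA : fA g ((d:ℝ)) = (d:ℝ) := (Dst_spec hg hfib d.2).2.1
          have : σ d ≤ q t := hσ_le_q t ht d (by rw [← hdA]; exact hAA)
          linarith
      refine ⟨(d:ℝ) - t, by linarith [le_fB hg ht], fun u hu htu hud => ?_⟩
      have hqu : q u ≤ σ d := by
        apply csSup_le ⟨0, mem_insert _ _⟩
        intro x hx
        rcases mem_insert_iff.1 hx with rfl | ⟨e', he', rfl⟩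
        · exact le_of_lt (hσ_mem d).1
        · have h4 : fA g u ≤ u := fA_le hg hu
          have hlt : e' < d := by
            apply Subtype.coe_lt_coe.1
            show (e':ℝ) < (d:ℝ)
            linarith
          exact le_of_lt (hσ_mono hlt)
      linarith
  have hq_left : ∀ t ∈ Icc (0:ℝ) 1, ∀ ε > (0:ℝ), ∃ δ > (0:ℝ), ∀ u ∈ Icc (0:ℝ) 1,
      u ≤ t → t - u < δ → q t - ε < q u := by
    intro t ht ε hε
    by_cases h0 : q t - ε < 0
    · exact ⟨1, one_pos, fun u hu _ _ => lt_of_lt_of_le h0 (hq0le u)⟩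
    · push_neg at h0
      have hlt : q t - ε < q t := by linarith
      obtain ⟨x, hx, hxgt⟩ := exists_lt_of_lt_csSup ⟨0, mem_insert _ _⟩ hlt
      rcases mem_insert_iff.1 hx with rfl | ⟨d, hd, rfl⟩
      · exfalso; linarith
      · have hdI : (d:ℝ) ∈ Icc (0:ℝ) 1 := (Dst_spec hg hfib d.2).1
        have hdA : fA g ((d:ℝ)) = (d:ℝ) := (Dst_spec hg hfib d.2).2.1
        have hBd : fB g ((d:ℝ)) < fA g t :=
          fB_lt_fA hg hfib hdI ht (by rw [hdA]; exact hd)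
        refine ⟨t - fB g ((d:ℝ)), by linarith [fA_le hg ht], fun u hu hut hdu => ?_⟩
        have hu1 : fB g ((d:ℝ)) < u := by linarith
        have hdu' : (d:ℝ) < fA g u := by
          by_contra hcon
          push_neg at hcon
          have h5 : (d:ℝ) ≤ fB g ((d:ℝ)) := by
            have := fA_le_fB hg hdI
            linarith
          have h2 : fA g u ≤ fB g ((d:ℝ)) := le_trans hcon h5
          have hmem : fB g ((d:ℝ)) ∈ fib g u :=
            mem_fib_of_between hfib (fA_mem hg hu) (fB_mem hg hu) h2
              (le_trans (le_of_lt hu1) (le_fB hg hu))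
          have hgu : g u = g ((d:ℝ)) := by rw [← hmem.2, gfB hg hdI]
          have humem : u ∈ fib g ((d:ℝ)) := by
            rw [← fib_eq hgu]; exact self_mem_fib hu
          linarith [le_fB_of_mem humem]
        have : σ d ≤ q u := le_csSup (hqbdd u) (mem_insert_of_mem _ ⟨d, hdu', rfl⟩)
        linarith
  have hq_cont : ContinuousOn q (Icc 0 1) := by
    rw [Metric.continuousOn_iff]
    intro b hb ε hε
    obtain ⟨δR, hδR, hR⟩ := hq_right b hb ε hε
    obtain ⟨δL, hδL, hL⟩ := hq_left b hb ε hε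
    refine ⟨min δL δR, lt_min hδL hδR, fun u hu hdist => ?_⟩
    rw [Real.dist_eq, abs_sub_lt_iff] at hdist
    rw [Real.dist_eq, abs_sub_lt_iff]
    rcases le_total u b with h | h
    · have h1 := hL u hu h (lt_of_lt_of_le hdist.2 (min_le_left _ _))
      have h2 := hq_mono u b hu hb h
      constructor <;> linarith
    · have h1 := hR u hu h (lt_of_lt_of_le hdist.1 (min_le_right _ _))
      have h2 := hq_mono b u hb hu h
      constructor <;> linarith
  have hq_surj : ∀ y ∈ Icc (0:ℝ) 1, ∃ t ∈ Icc (0:ℝ) 1, q t = y := by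
    intro y hy
    have himv := intermediate_value_Icc zero_le_one hq_cont
    rw [hq0, hq1] at himv
    obtain ⟨t, htI, htq⟩ := himv hy
    exact ⟨t, htI, htq⟩
  set φ : ℝ → ℝ × ℝ := fun y => g (Function.invFunOn q (Icc 0 1) y) with hφdef
  have hτ : ∀ y ∈ Icc (0:ℝ) 1, Function.invFunOn q (Icc 0 1) y ∈ Icc (0:ℝ) 1 ∧
      q (Function.invFunOn q (Icc 0 1) y) = y := by
    intro y hy
    obtain ⟨t, ht, hqt⟩ := hq_surj y hy
    exact ⟨Function.invFunOn_mem ⟨t, ht, hqt⟩, Function.invFunOn_eq ⟨t, ht, hqt⟩⟩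
  refine ⟨φ, ?_, ?_, ?_, ?_, ?_⟩
  · rw [continuousOn_iff_isClosed]
    intro C hC
    have hEclosed : IsClosed (Icc (0:ℝ) 1 ∩ g ⁻¹' C) :=
      hg.preimage_isClosed_of_isClosed isClosed_Icc hC
    have hEcomp : IsCompact (Icc (0:ℝ) 1 ∩ g ⁻¹' C) :=
      isCompact_Icc.of_isClosed_subset hEclosed inter_subset_left
    refine ⟨q '' (Icc (0:ℝ) 1 ∩ g ⁻¹' C),
      (hEcomp.image_of_continuousOn (hq_cont.mono inter_subset_left)).isClosed, ?_⟩
    ext y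
    constructor
    · rintro ⟨hy1, hy2⟩
      obtain ⟨ht1, ht2⟩ := hτ y hy2
      exact ⟨⟨_, ⟨ht1, hy1⟩, ht2⟩, hy2⟩
    · rintro ⟨⟨t, ⟨htI, htC⟩, hqt⟩, hyI⟩
      obtain ⟨ht1, ht2⟩ := hτ y hyI
      have hgg : g (Function.invFunOn q (Icc 0 1) y) = g t :=
        hq_injfib _ _ ht1 htI (by rw [ht2, ← hqt])
      refine ⟨?_, hyI⟩
      show g (Function.invFunOn q (Icc 0 1) y) ∈ C
      rw [hgg]; exact htC
  · intro y₁ hy₁ y₂ hy₂ hφeq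
    obtain ⟨h11, h12⟩ := hτ y₁ hy₁
    obtain ⟨h21, h22⟩ := hτ y₂ hy₂
    have hgeq : g (Function.invFunOn q (Icc 0 1) y₁) = g (Function.invFunOn q (Icc 0 1) y₂) := hφeq
    have := hq_gEq _ _ hgeq
    rw [h12, h22] at this
    exact this
  · obtain ⟨h1, h2⟩ := hτ 0 h0I
    show g (Function.invFunOn q (Icc 0 1) 0) = g 0
    apply hq_injfib _ _ h1 h0I
    rw [h2, hq0]
  · obtain ⟨h1, h2⟩ := hτ 1 h1I
    show g (Function.invFunOn q (Icc 0 1) 1) = g 1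
    apply hq_injfib _ _ h1 h1I
    rw [h2, hq1]
  · apply Subset.antisymm
    · rintro x ⟨y, hy, rfl⟩
      exact ⟨Function.invFunOn q (Icc 0 1) y, (hτ y hy).1, rfl⟩
    · rintro x ⟨t, ht, rfl⟩
      have hqtI : q t ∈ Icc (0:ℝ) 1 := ⟨hq0le t, hqle1 t⟩
      obtain ⟨h1, h2⟩ := hτ (q t) hqtI
      refine ⟨q t, hqtI, ?_⟩
      show g (Function.invFunOn q (Icc 0 1) (q t)) = g t
      exact hq_injfib _ _ h1 ht h2

lemma contOn_union_closed {ψ : ℝ → ℝ × ℝ} {A B : Set ℝ} (hA : IsClosed A) (hB : IsClosed B)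
    (h1 : ContinuousOn ψ A) (h2 : ContinuousOn ψ B) : ContinuousOn ψ (A ∪ B) := by
  intro t ht
  apply ContinuousWithinAt.union
  · by_cases h : t ∈ A
    · exact h1 t h
    · exact continuousWithinAt_of_notMem_closure (by rwa [hA.closure_eq])
  · by_cases h : t ∈ B
    · exact h2 t h
    · exact continuousWithinAt_of_notMem_closure (by rwa [hB.closure_eq])

/-- The arc theorem: a path-connected set contains an arc between any two of its
distinct points. -/
lemma exists_arc {S : Set (ℝ × ℝ)} {u v : ℝ × ℝ} (hne : u ≠ v) (h : JoinedIn S u v) :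
    ∃ φ : ℝ → ℝ × ℝ, ContinuousOn φ (Icc 0 1) ∧ InjOn φ (Icc 0 1) ∧
      φ 0 = u ∧ φ 1 = v ∧ φ '' Icc 0 1 ⊆ S := by
  obtain ⟨γ, hγ⟩ := h
  set f : ℝ → ℝ × ℝ := fun t => γ (Set.projIcc 0 1 zero_le_one t) with hfdef
  have hfc : Continuous f := γ.continuous.comp continuous_projIcc
  have hf0 : f 0 = u := by
    show γ (Set.projIcc 0 1 zero_le_one 0) = u
    rw [Set.projIcc_left]
    exact γ.source
  have hf1 : f 1 = v := by
    show γ (Set.projIcc 0 1 zero_le_one 1) = v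
    rw [Set.projIcc_right]
    exact γ.target
  have hfS : ∀ t, f t ∈ S := fun t => hγ _
  obtain ⟨K, hK, hmin⟩ := exists_minimal_goodK f hfc
  have hg : ContinuousOn (gg f K) (Icc 0 1) := gg_contOn hfc hK
  have hfib : ∀ s t w : ℝ, s ∈ Icc (0:ℝ) 1 → t ∈ Icc (0:ℝ) 1 → s ≤ w → w ≤ t →
      gg f K s = gg f K t → gg f K w = gg f K s :=
    fun s t w hs ht h1 h2 h3 => gg_interval_fibers hK hmin hs ht h1 h2 h3
  have hg0 : gg f K 0 = u := by
    have h0 : rho K 0 = 0 := rho_eq_self hK hK.2.2.1 (le_refl 0)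
    show f (rho K 0) = u
    rw [h0, hf0]
  have hg1 : gg f K 1 = v := by
    have h1 : rho K 1 = 1 := rho_eq_self hK hK.2.2.2.1 zero_le_one
    show f (rho K 1) = v
    rw [h1, hf1]
  have hne01 : gg f K 0 ≠ gg f K 1 := by rw [hg0, hg1]; exact hne
  obtain ⟨φ, hc, hi, h0, h1, himg⟩ := exists_arc_param (gg f K) hg hfib hne01
  refine ⟨φ, hc, hi, by rw [h0, hg0], by rw [h1, hg1], ?_⟩
  rw [himg]
  rintro x ⟨t, _, rfl⟩
  exact hfS _

/-- Rerouting an arc through `X ∩ Y` so that its trace on `Y` becomes an interval. -/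
lemma reroute (X Y : Set (ℝ × ℝ)) (hYc : IsClosed Y)
    (hXY : X ∩ Y = ∅ ∨ IsPathConnected (X ∩ Y))
    (φ : ℝ → ℝ × ℝ) (hφc : ContinuousOn φ (Icc 0 1)) (hφi : InjOn φ (Icc 0 1))
    (hφX : φ '' Icc 0 1 ⊆ X) :
    ∃ ψ : ℝ → ℝ × ℝ, ContinuousOn ψ (Icc 0 1) ∧ InjOn ψ (Icc 0 1) ∧
      ψ 0 = φ 0 ∧ ψ 1 = φ 1 ∧ ψ '' Icc 0 1 ⊆ X ∧
      OrdConnected {t | t ∈ Icc (0:ℝ) 1 ∧ ψ t ∈ Y} ∧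
      ∀ Z : Set (ℝ × ℝ), Disjoint (Y ∩ X) (Z ∩ X) →
        OrdConnected {t | t ∈ Icc (0:ℝ) 1 ∧ φ t ∈ Z} →
        OrdConnected {t | t ∈ Icc (0:ℝ) 1 ∧ ψ t ∈ Z} := by
  classical
  set T := {t | t ∈ Icc (0:ℝ) 1 ∧ φ t ∈ Y} with hTdef
  have hTsub : T ⊆ Icc 0 1 := fun t ht => ht.1
  rcases T.eq_empty_or_nonempty with hTe | hTne
  · refine ⟨φ, hφc, hφi, rfl, rfl, hφX, ?_, fun Z _ hZ => hZ⟩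
    rw [show {t | t ∈ Icc (0:ℝ) 1 ∧ φ t ∈ Y} = (∅ : Set ℝ) from hTe]
    exact ordConnected_empty
  · have hTclosed : IsClosed T := by
      have : T = Icc 0 1 ∩ φ ⁻¹' Y := by ext t; exact Iff.rfl
      rw [this]
      exact hφc.preimage_isClosed_of_isClosed isClosed_Icc hYc
    set s₀ := sInf T with hs₀def
    set e₀ := sSup T with he₀def
    have hs₀T : s₀ ∈ T := hTclosed.csInf_mem hTne (bddBelow_Icc.mono hTsub)
    have he₀T : e₀ ∈ T := hTclosed.csSup_mem hTne (bddAbove_Icc.mono hTsub)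
    have hs₀e₀ : s₀ ≤ e₀ := csInf_le_csSup hTne (bddBelow_Icc.mono hTsub) (bddAbove_Icc.mono hTsub)
    have hTlb : ∀ t ∈ T, s₀ ≤ t := fun t ht => csInf_le (bddBelow_Icc.mono hTsub) ht
    have hTub : ∀ t ∈ T, t ≤ e₀ := fun t ht => le_csSup (bddAbove_Icc.mono hTsub) ht
    rcases eq_or_lt_of_le hs₀e₀ with heq | hlt
    · have hTsing : T = {s₀} := by
        apply Subset.antisymm
        · intro t ht
          have h1 := hTlb t ht
          have h2 := hTub t ht
          rw [← heq] at h2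
          exact le_antisymm h2 h1
        · intro t ht
          rw [mem_singleton_iff] at ht
          rw [ht]; exact hs₀T
      refine ⟨φ, hφc, hφi, rfl, rfl, hφX, ?_, fun Z _ hZ => hZ⟩
      rw [show {t | t ∈ Icc (0:ℝ) 1 ∧ φ t ∈ Y} = ({s₀} : Set ℝ) from hTsing]
      exact ordConnected_singleton
    · have hs₀I : s₀ ∈ Icc (0:ℝ) 1 := hs₀T.1
      have he₀I : e₀ ∈ Icc (0:ℝ) 1 := he₀T.1
      have hφs₀ : φ s₀ ∈ X ∩ Y := ⟨hφX ⟨s₀, hs₀I, rfl⟩, hs₀T.2⟩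
      have hφe₀ : φ e₀ ∈ X ∩ Y := ⟨hφX ⟨e₀, he₀I, rfl⟩, he₀T.2⟩
      have hXYp : IsPathConnected (X ∩ Y) := by
        rcases hXY with h | h
        · exfalso; rw [h] at hφs₀; exact hφs₀
        · exact h
      have hneq : φ s₀ ≠ φ e₀ := fun h => ne_of_lt hlt (hφi hs₀I he₀I h)
      obtain ⟨ψ₀, hψ₀c, hψ₀i, hψ₀0, hψ₀1, hψ₀S⟩ :=
        exists_arc hneq (hXYp.joinedIn _ hφs₀ _ hφe₀)
      set L : ℝ → ℝ := fun t => (t - s₀) / (e₀ - s₀) with hLdef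
      have hL0 : L s₀ = 0 := by simp [hLdef]
      have hL1 : L e₀ = 1 := by
        simp only [hLdef]
        rw [div_self (by linarith)]
      have hLmem : ∀ t, s₀ ≤ t → t ≤ e₀ → L t ∈ Icc (0:ℝ) 1 := by
        intro t h1 h2
        constructor
        · apply div_nonneg (by linarith) (by linarith)
        · rw [div_le_one (by linarith)]; linarith
      have hLinj : ∀ t₁ t₂, L t₁ = L t₂ → t₁ = t₂ := by
        intro t₁ t₂ h
        simp only [hLdef] at h
        have hc : e₀ - s₀ ≠ 0 := by linarith
        field_simp [hc] at h
        linarith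
      set ψ : ℝ → ℝ × ℝ := fun t => if t < s₀ then φ t else if t ≤ e₀ then ψ₀ (L t) else φ t
        with hψdef
      have hψ_mid : ∀ t, s₀ ≤ t → t ≤ e₀ → ψ t = ψ₀ (L t) := by
        intro t h1 h2
        simp only [hψdef]
        rw [if_neg (not_lt.2 h1), if_pos h2]
      have hψ_left : ∀ t, t < s₀ → ψ t = φ t := by
        intro t h
        simp only [hψdef]
        rw [if_pos h]
      have hψ_right : ∀ t, e₀ < t → ψ t = φ t := by
        intro t h
        simp only [hψdef]
        rw [if_neg (not_lt.2 (by linarith)), if_neg (not_le.2 h)]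
      have hψ_out : ∀ t, t ∉ Icc s₀ e₀ → ψ t = φ t := by
        intro t ht
        rcases not_and_or.1 ht with h | h
        · exact hψ_left t (not_le.1 h)
        · exact hψ_right t (not_le.1 h)
      have hmidXY : ∀ t, s₀ ≤ t → t ≤ e₀ → ψ t ∈ X ∩ Y := by
        intro t h1 h2
        rw [hψ_mid t h1 h2]
        exact hψ₀S ⟨L t, hLmem t h1 h2, rfl⟩
      have hmemY : ∀ t ∈ Icc (0:ℝ) 1, (ψ t ∈ Y ↔ t ∈ Icc s₀ e₀) := by
        intro t ht
        constructor
        · intro hY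
          by_contra hmid
          rw [hψ_out t hmid] at hY
          exact hmid ⟨hTlb t ⟨ht, hY⟩, hTub t ⟨ht, hY⟩⟩
        · intro hmid
          exact (hmidXY t hmid.1 hmid.2).2
      have hmemX : ∀ t ∈ Icc (0:ℝ) 1, ψ t ∈ X := by
        intro t ht
        by_cases hmid : t ∈ Icc s₀ e₀
        · exact (hmidXY t hmid.1 hmid.2).1
        · rw [hψ_out t hmid]
          exact hφX ⟨t, ht, rfl⟩
      have hψc : ContinuousOn ψ (Icc 0 1) := by
        have hIccEq : Icc (0:ℝ) 1 = Icc 0 s₀ ∪ (Icc s₀ e₀ ∪ Icc e₀ 1) := by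
          rw [Icc_union_Icc_eq_Icc hs₀e₀ he₀I.2, Icc_union_Icc_eq_Icc hs₀I.1
            (le_trans hs₀e₀ he₀I.2)]
        have c1 : ContinuousOn ψ (Icc 0 s₀) := by
          apply ContinuousOn.congr (hφc.mono (Icc_subset_Icc (le_refl 0) hs₀I.2))
          intro t ht
          rcases lt_or_eq_of_le ht.2 with h | h
          · exact hψ_left t h
          · rw [h, hψ_mid s₀ (le_refl s₀) hs₀e₀, hL0, hψ₀0]
        have c2 : ContinuousOn ψ (Icc s₀ e₀) := by
          apply ContinuousOn.congr (f := fun t => ψ₀ (L t))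
          · apply hψ₀c.comp
            · exact (((continuous_id.sub continuous_const).div_const _).continuousOn)
            · intro t ht
              exact hLmem t ht.1 ht.2
          · intro t ht
            exact hψ_mid t ht.1 ht.2
        have c3 : ContinuousOn ψ (Icc e₀ 1) := by
          apply ContinuousOn.congr (hφc.mono (Icc_subset_Icc he₀I.1 (le_refl 1)))
          intro t ht
          rcases lt_or_eq_of_le ht.1 with h | h
          · exact hψ_right t h
          · rw [← h, hψ_mid e₀ hs₀e₀ (le_refl e₀), hL1, hψ₀1]
        rw [hIccEq]
        exact contOn_union_closed isClosed_Icc (isClosed_Icc.union isClosed_Icc) c1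
          (contOn_union_closed isClosed_Icc isClosed_Icc c2 c3)
      have hψi : InjOn ψ (Icc 0 1) := by
        intro t₁ h₁ t₂ h₂ heq
        by_cases hm₁ : t₁ ∈ Icc s₀ e₀ <;> by_cases hm₂ : t₂ ∈ Icc s₀ e₀
        · rw [hψ_mid t₁ hm₁.1 hm₁.2, hψ_mid t₂ hm₂.1 hm₂.2] at heq
          exact hLinj t₁ t₂ (hψ₀i (hLmem t₁ hm₁.1 hm₁.2) (hLmem t₂ hm₂.1 hm₂.2) heq)
        · exfalso
          apply hm₂
          rw [← hmemY t₂ h₂, ← heq]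
          exact (hmemY t₁ h₁).2 hm₁
        · exfalso
          apply hm₁
          rw [← hmemY t₁ h₁, heq]
          exact (hmemY t₂ h₂).2 hm₂
        · rw [hψ_out t₁ hm₁, hψ_out t₂ hm₂] at heq
          exact hφi h₁ h₂ heq
      have hψ0 : ψ 0 = φ 0 := by
        by_cases h : (0:ℝ) < s₀
        · exact hψ_left 0 h
        · have hs0 : s₀ = 0 := le_antisymm (not_lt.1 h) hs₀I.1
          rw [hψ_mid 0 (by rw [hs0]) (by rw [← hs0]; exact hs₀e₀.trans (le_refl e₀)), ← hs0, hL0,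
            hψ₀0, hs0]
      have hψ1 : ψ 1 = φ 1 := by
        by_cases h : e₀ < 1
        · exact hψ_right 1 h
        · have he1 : e₀ = 1 := le_antisymm he₀I.2 (not_lt.1 h)
          rw [hψ_mid 1 (by rw [← he1]; exact hs₀e₀) (by rw [he1]), ← he1, hL1, hψ₀1, he1]
      refine ⟨ψ, hψc, hψi, hψ0, hψ1, ?_, ?_, ?_⟩
      · rintro x ⟨t, ht, rfl⟩
        exact hmemX t ht
      · have : {t | t ∈ Icc (0:ℝ) 1 ∧ ψ t ∈ Y} = Icc s₀ e₀ := by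
          ext t
          constructor
          · rintro ⟨ht, hY⟩
            exact (hmemY t ht).1 hY
          · intro ht
            have htI : t ∈ Icc (0:ℝ) 1 := ⟨le_trans hs₀I.1 ht.1, le_trans ht.2 he₀I.2⟩
            exact ⟨htI, (hmemY t htI).2 ht⟩
        rw [this]
        exact ordConnected_Icc
      · intro Z hdisj hZord
        have hmidZ : ∀ t, s₀ ≤ t → t ≤ e₀ → ψ t ∉ Z := by
          intro t h1 h2 hZ
          have hm := hmidXY t h1 h2
          exact (Set.disjoint_left.1 hdisj ⟨hm.2, hm.1⟩) ⟨hZ, hm.1⟩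
        have hs₀Z : φ s₀ ∉ Z := by
          have := hmidZ s₀ (le_refl s₀) hs₀e₀
          rwa [hψ_mid s₀ (le_refl s₀) hs₀e₀, hL0, hψ₀0] at this
        have he₀Z : φ e₀ ∉ Z := by
          have := hmidZ e₀ hs₀e₀ (le_refl e₀)
          rwa [hψ_mid e₀ hs₀e₀ (le_refl e₀), hL1, hψ₀1] at this
        set O := {t | t ∈ Icc (0:ℝ) 1 ∧ φ t ∈ Z} with hOdef
        by_cases hO : ∃ t ∈ O, t ∈ Icc s₀ e₀
        · -- new trace is empty
          have : {t | t ∈ Icc (0:ℝ) 1 ∧ ψ t ∈ Z} = (∅ : Set ℝ) := by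
            ext t
            simp only [mem_setOf_eq, mem_empty_iff_false, iff_false, not_and]
            intro htI htZ
            by_cases hmid : t ∈ Icc s₀ e₀
            · exact hmidZ t hmid.1 hmid.2 htZ
            · obtain ⟨t', ht'O, ht'mid⟩ := hO
              rw [hψ_out t hmid] at htZ
              have htO : t ∈ O := ⟨htI, htZ⟩
              have ht'lt : s₀ < t' ∧ t' < e₀ := by
                constructor
                · rcases lt_or_eq_of_le ht'mid.1 with h | h
                  · exact h
                  · exfalso; apply hs₀Z; rw [h]; exact ht'O.2
                · rcases lt_or_eq_of_le ht'mid.2 with h | h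
                  · exact h
                  · exfalso; apply he₀Z; rw [← h]; exact ht'O.2
              rcases not_and_or.1 hmid with h | h
              · have hts : t < s₀ := not_le.1 h
                have : s₀ ∈ O := hZord.out htO ht'O ⟨le_of_lt hts, le_of_lt ht'lt.1⟩
                exact hs₀Z this.2
              · have hte : e₀ < t := not_le.1 h
                have : e₀ ∈ O := hZord.out ht'O htO ⟨le_of_lt ht'lt.2, le_of_lt hte⟩
                exact he₀Z this.2
          rw [this]
          exact ordConnected_empty
        · have : {t | t ∈ Icc (0:ℝ) 1 ∧ ψ t ∈ Z} = O := by
            ext t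
            simp only [mem_setOf_eq, hOdef]
            constructor
            · rintro ⟨htI, htZ⟩
              by_cases hmid : t ∈ Icc s₀ e₀
              · exact absurd htZ (hmidZ t hmid.1 hmid.2)
              · rw [hψ_out t hmid] at htZ
                exact ⟨htI, htZ⟩
            · rintro ⟨htI, htZ⟩
              have hmid : t ∉ Icc s₀ e₀ := fun hmid => hO ⟨t, ⟨htI, htZ⟩, hmid⟩
              rw [hψ_out t hmid]
              exact ⟨htI, htZ⟩
          rw [this]
          exact hZord

lemma exists_invariant_arc (X : Set (ℝ × ℝ)) (hXp : IsPathConnected X)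
    (x₁ x₂ : ℝ × ℝ) (hx₁ : x₁ ∈ X) (hx₂ : x₂ ∈ X) (hne : x₁ ≠ x₂)
    (𝒢 : Set (Set (ℝ × ℝ))) (h𝒢 : 𝒢.Finite) :
    (∀ Y ∈ 𝒢, IsClosed Y) →
    (∀ Y ∈ 𝒢, X ∩ Y = ∅ ∨ IsPathConnected (X ∩ Y)) →
    (𝒢.Pairwise fun Y Z => Disjoint (Y ∩ X) (Z ∩ X)) →
    ∃ φ : ℝ → ℝ × ℝ, ContinuousOn φ (Icc 0 1) ∧ InjOn φ (Icc 0 1) ∧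
      φ 0 = x₁ ∧ φ 1 = x₂ ∧ φ '' Icc 0 1 ⊆ X ∧
      ∀ Y ∈ 𝒢, OrdConnected {t | t ∈ Icc (0:ℝ) 1 ∧ φ t ∈ Y} := by
  refine Set.Finite.induction_on (motive := fun 𝒢 _ =>
      (∀ Y ∈ 𝒢, IsClosed Y) →
      (∀ Y ∈ 𝒢, X ∩ Y = ∅ ∨ IsPathConnected (X ∩ Y)) →
      (𝒢.Pairwise fun Y Z => Disjoint (Y ∩ X) (Z ∩ X)) →
      ∃ φ : ℝ → ℝ × ℝ, ContinuousOn φ (Icc 0 1) ∧ InjOn φ (Icc 0 1) ∧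
        φ 0 = x₁ ∧ φ 1 = x₂ ∧ φ '' Icc 0 1 ⊆ X ∧
        ∀ Y ∈ 𝒢, OrdConnected {t | t ∈ Icc (0:ℝ) 1 ∧ φ t ∈ Y}) 𝒢 h𝒢 ?_ ?_
  · intro _ _ _
    obtain ⟨φ, h1, h2, h3, h4, h5⟩ := exists_arc hne (hXp.joinedIn x₁ hx₁ x₂ hx₂)
    exact ⟨φ, h1, h2, h3, h4, h5, fun Y hY => (notMem_empty Y hY).elim⟩
  · intro a s ha hsfin ih hcl hconn hdisj
    obtain ⟨φ, h1, h2, h3, h4, h5, h6⟩ := ih (fun Y hY => hcl Y (mem_insert_of_mem _ hY))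
      (fun Y hY => hconn Y (mem_insert_of_mem _ hY)) (hdisj.mono (subset_insert _ _))
    obtain ⟨ψ, k1, k2, k3, k4, k5, k6, k7⟩ := reroute X a (hcl a (mem_insert _ _))
      (hconn a (mem_insert _ _)) φ h1 h2 h5
    refine ⟨ψ, k1, k2, by rw [k3, h3], by rw [k4, h4], k5, ?_⟩
    intro Y hY
    rcases mem_insert_iff.1 hY with rfl | hY'
    · exact k6
    · have hne' : a ≠ Y := fun h => ha (h ▸ hY')
      have hd : Disjoint (a ∩ X) (Y ∩ X) :=
        hdisj (mem_insert _ _) (mem_insert_of_mem _ hY') hne'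
      exact k7 Y hd (h6 Y hY')

end SimpleArc

/-- Between any two distinct points of a compact path-connected set `X` simple with
respect to a family `𝒴` with pairwise disjoint traces on `X`, there is an arc in `X`
simple with respect to `𝒴`. -/
theorem exists_simple_arc
    (X : Set (ℝ × ℝ)) (hXc : IsCompact X) (hXp : IsPathConnected X)
    (𝒴 : Set (Set (ℝ × ℝ))) (h𝒴fin : 𝒴.Finite)
    (h𝒴 : ∀ Y ∈ 𝒴, IsCompact Y ∧ IsPathConnected Y)
    (hsimple : IsSimpleFamily (insert X 𝒴))
    (hdisj : 𝒴.Pairwise fun Y Z => Disjoint (Y ∩ X) (Z ∩ X))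
    (x₁ x₂ : ℝ × ℝ) (hx₁ : x₁ ∈ X) (hx₂ : x₂ ∈ X) (hne : x₁ ≠ x₂) :
    ∃ A ⊆ X, IsArcBetween A x₁ x₂ ∧ IsSimpleFamily (insert A 𝒴) := by
  classical
  obtain ⟨φ, h1, h2, h3, h4, h5, h6⟩ := SimpleArc.exists_invariant_arc X hXp x₁ x₂ hx₁ hx₂ hne
    𝒴 h𝒴fin
    (fun Y hY => (h𝒴 Y hY).1.isClosed)
    (fun Y hY => by
      have hsub : ({X, Y} : Set (Set (ℝ × ℝ))) ⊆ insert X 𝒴 := by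
        intro Z hZ
        rcases hZ with rfl | hZ
        · exact mem_insert _ _
        · rw [mem_singleton_iff] at hZ
          rw [hZ]
          exact mem_insert_of_mem _ hY
      have := hsimple {X, Y} hsub ⟨X, mem_insert _ _⟩
      rwa [sInter_pair] at this)
    hdisj
  refine ⟨φ '' Icc 0 1, h5, ⟨φ, h1, h2, h3, h4, rfl⟩, ?_⟩
  intro G hG hGne
  by_cases hGY : G ⊆ 𝒴
  · exact hsimple G (hGY.trans (subset_insert X 𝒴)) hGne
  · have hAG : (φ '' Icc 0 1) ∈ G := by
      by_contra hA
      apply hGY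
      intro Z hZ
      rcases mem_insert_iff.1 (hG hZ) with h | h
      · exact absurd (h ▸ hZ) hA
      · exact h
    have hG0 : G \ {φ '' Icc 0 1} ⊆ 𝒴 := by
      rintro Z ⟨hZ1, hZ2⟩
      rcases mem_insert_iff.1 (hG hZ1) with h | h
      · exact absurd (mem_singleton_iff.2 h) hZ2
      · exact h
    have hGeq : G = insert (φ '' Icc 0 1) (G \ {φ '' Icc 0 1}) := by
      rw [insert_diff_singleton, insert_eq_of_mem hAG]
    rw [hGeq, sInter_insert]
    rcases (G \ {φ '' Icc 0 1}).eq_empty_or_nonempty with hemp | ⟨Y, hY⟩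
    · rw [hemp, sInter_empty, inter_univ]
      right
      have hIpc : IsPathConnected (Icc (0:ℝ) 1) :=
        (convex_Icc (0:ℝ) 1).isPathConnected ⟨0, le_refl 0, zero_le_one⟩
      exact hIpc.image' h1
    · by_cases hYonly : G \ {φ '' Icc 0 1} ⊆ {Y}
      · have hsing : G \ {φ '' Icc 0 1} = {Y} :=
          Subset.antisymm hYonly (singleton_subset_iff.2 hY)
        rw [hsing, sInter_singleton]
        have hYmem : Y ∈ 𝒴 := hG0 hY
        have hreq : φ '' Icc 0 1 ∩ Y = φ '' {t | t ∈ Icc (0:ℝ) 1 ∧ φ t ∈ Y} := by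
          ext x
          constructor
          · rintro ⟨⟨t, ht, rfl⟩, hxY⟩
            exact ⟨t, ⟨ht, hxY⟩, rfl⟩
          · rintro ⟨t, ⟨ht, htY⟩, rfl⟩
            exact ⟨⟨t, ht, rfl⟩, htY⟩
        rw [hreq]
        rcases ({t | t ∈ Icc (0:ℝ) 1 ∧ φ t ∈ Y}).eq_empty_or_nonempty with he | hne'
        · left; rw [he, image_empty]
        · right
          have hconv : Convex ℝ {t | t ∈ Icc (0:ℝ) 1 ∧ φ t ∈ Y} :=
            convex_iff_ordConnected.2 (h6 Y hYmem)
          exact (hconv.isPathConnected hne').image' (h1.mono fun t ht => ht.1)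
      · left
        obtain ⟨Z, hZ, hZY⟩ := not_subset.1 hYonly
        have hZmem : Z ∈ 𝒴 := hG0 hZ
        have hYmem : Y ∈ 𝒴 := hG0 hY
        have hYZ : Y ≠ Z := fun h => hZY (mem_singleton_iff.2 h.symm)
        have hd : Disjoint (Y ∩ X) (Z ∩ X) := hdisj hYmem hZmem hYZ
        apply eq_empty_iff_forall_notMem.2
        intro x hx
        rw [mem_inter_iff] at hx
        have hxX : x ∈ X := h5 hx.1
        have hxY : x ∈ Y := (mem_sInter.1 hx.2) Y hY
        have hxZ : x ∈ Z := (mem_sInter.1 hx.2) Z hZ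
        exact Set.disjoint_left.1 hd ⟨hxY, hxX⟩ ⟨hxZ, hxX⟩
end
end

section
/- Let F be a grounded family and let a, b ≥ 0 be integers with χ(F) > 2a(b+1). Then there is a subfamily H ⊆ F such that χ(H) > a and, for any two distinct intersecting members H₁, H₂ ∈ H with H₁ ≺ H₂, the family F(H₁,H₂) satisfies χ(F(H₁,H₂)) > b. -/
open Set

noncomputable section

namespace DecompAux

abbrev Fam := FamColorable

lemma fam_mono {S T : Set (Set (ℝ × ℝ))} {m : ℕ} (hsub : S ⊆ T) (h : Fam T m) : Fam S m := by
  obtain ⟨c, h1, h2⟩ := h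
  exact ⟨c, fun X hX => h1 X (hsub hX), fun X hX Y hY => h2 X (hsub hX) Y (hsub hY)⟩

lemma fam_le {S : Set (Set (ℝ × ℝ))} {m m' : ℕ} (hmm : m ≤ m') (h : Fam S m) : Fam S m' := by
  obtain ⟨c, h1, h2⟩ := h
  exact ⟨c, fun X hX => lt_of_lt_of_le (h1 X hX) hmm, h2⟩

lemma fam_empty (m : ℕ) : Fam ∅ m :=
  ⟨fun _ => 0, fun X hX => absurd hX (notMem_empty X), fun X hX => absurd hX (notMem_empty X)⟩

/-- segment of the family between positions `s` (incl.) and `t` (excl.) -/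
def segD (F : Set (Set (ℝ × ℝ))) (pos : Set (ℝ × ℝ) → ℕ) (s t : ℕ) : Set (Set (ℝ × ℝ)) :=
  {X | X ∈ F ∧ s ≤ pos X ∧ pos X < t}

def badD (F : Set (Set (ℝ × ℝ))) (pos : Set (ℝ × ℝ) → ℕ) (b : ℕ) (s t : ℕ) : Prop :=
  ¬ Fam (segD F pos s t) b

open Classical in
def nextCutD (F : Set (Set (ℝ × ℝ))) (pos : Set (ℝ × ℝ) → ℕ) (b n : ℕ) (s : ℕ) : ℕ :=
  if _ : ∃ t, s < t ∧ badD F pos b s t then sInf {t | s < t ∧ badD F pos b s t} else n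

def cutD (F : Set (Set (ℝ × ℝ))) (pos : Set (ℝ × ℝ) → ℕ) (b n : ℕ) : ℕ → ℕ
  | 0 => 0
  | j + 1 => nextCutD F pos b n (cutD F pos b n j)

open Classical in
def blkD (F : Set (Set (ℝ × ℝ))) (pos : Set (ℝ × ℝ) → ℕ) (b n : ℕ) (i : ℕ) : ℕ :=
  Nat.findGreatest (fun j => cutD F pos b n j ≤ i) i

section Machinery

variable {F : Set (Set (ℝ × ℝ))} {pos : Set (ℝ × ℝ) → ℕ} {b n : ℕ}
variable (hlt : ∀ X ∈ F, pos X < n)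

lemma bad_nonempty {s t : ℕ} (h : badD F pos b s t) : (segD F pos s t).Nonempty := by
  rw [nonempty_iff_ne_empty]
  intro he
  exact h (by rw [badD] at *; rw [he] ; exact fam_empty b) -- fix

lemma bad_mono {s t t' : ℕ} (hsub : segD F pos s t ⊆ segD F pos s t') (h : badD F pos b s t) :
    badD F pos b s t' := fun hc => h (fam_mono hsub hc)

include hlt in
lemma seg_sub_n {s t : ℕ} : segD F pos s t ⊆ segD F pos s n := by
  rintro X ⟨hXF, hs, _⟩
  exact ⟨hXF, hs, hlt X hXF⟩

include hlt in
lemma nextCut_spec (s : ℕ) :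
    (s < nextCutD F pos b n s ∧ badD F pos b s (nextCutD F pos b n s) ∧
      ∀ t, s < t → t < nextCutD F pos b n s → ¬ badD F pos b s t) ∨
    (nextCutD F pos b n s = n ∧ ∀ t, s < t → ¬ badD F pos b s t) := by
  rw [nextCutD]
  split
  · rename_i h
    left
    have hmem : sInf {t | s < t ∧ badD F pos b s t} ∈ {t | s < t ∧ badD F pos b s t} := by
      apply Nat.sInf_mem
      exact h
    exact ⟨hmem.1, hmem.2, fun t ht1 ht2 hbad => (Nat.notMem_of_lt_sInf ht2) ⟨ht1, hbad⟩⟩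
  · rename_i h
    push_neg at h
    exact Or.inr ⟨rfl, h⟩

include hlt in
lemma nextCut_le_n (s : ℕ) : nextCutD F pos b n s ≤ n := by
  rw [nextCutD]
  split
  · rename_i h
    obtain ⟨t, hst, hbad⟩ := h
    have hne := bad_nonempty hbad
    obtain ⟨X, hXF, hsX, _⟩ := hne
    have hsn : s < n := lt_of_le_of_lt hsX (hlt X hXF)
    have hbn : badD F pos b s n := bad_mono (seg_sub_n hlt) hbad
    exact Nat.sInf_le ⟨hsn, hbn⟩
  · exact le_refl n

include hlt in
lemma cut_le_n : ∀ j, cutD F pos b n j ≤ n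
  | 0 => Nat.zero_le n
  | j + 1 => nextCut_le_n hlt _

include hlt in
lemma cut_mono_succ (j : ℕ) : cutD F pos b n j ≤ cutD F pos b n (j + 1) := by
  rcases nextCut_spec hlt (F := F) (pos := pos) (b := b) (cutD F pos b n j) with h | h
  · exact le_of_lt h.1
  · show cutD F pos b n j ≤ nextCutD F pos b n (cutD F pos b n j)
    rw [h.1]; exact cut_le_n hlt j

include hlt in
lemma cut_mono : Monotone (cutD F pos b n) :=
  monotone_nat_of_le_succ (cut_mono_succ hlt)

include hlt in
lemma nextCut_of_ge (s : ℕ) (hs : n ≤ s) : nextCutD F pos b n s = n := by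
  rcases nextCut_spec hlt (F := F) (pos := pos) (b := b) s with h | h
  · exfalso
    obtain ⟨X, hXF, hsX, _⟩ := bad_nonempty h.2.1
    exact absurd (hlt X hXF) (not_lt.2 (le_trans hs hsX))
  · exact h.1

include hlt in
lemma cut_dichotomy : ∀ j, j ≤ cutD F pos b n j ∨ cutD F pos b n j = n
  | 0 => Or.inl (le_refl 0)
  | j + 1 => by
    rcases cut_dichotomy j with h | h
    · rcases nextCut_spec hlt (F := F) (pos := pos) (b := b) (cutD F pos b n j) with h2 | h2
      · exact Or.inl (Nat.succ_le_of_lt (lt_of_le_of_lt h h2.1))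
      · exact Or.inr h2.1
    · right
      show nextCutD F pos b n (cutD F pos b n j) = n
      rw [h]
      exact nextCut_of_ge hlt n (le_refl n)

lemma cut_blk_le (i : ℕ) : cutD F pos b n (blkD F pos b n i) ≤ i := by
  classical
  have h0 : cutD F pos b n 0 ≤ i := Nat.zero_le i
  rw [blkD]
  exact Nat.findGreatest_spec (P := fun j => cutD F pos b n j ≤ i) (Nat.zero_le i) h0

include hlt in
lemma lt_cut_blk_succ (i : ℕ) (hi : i < n) : i < cutD F pos b n (blkD F pos b n i + 1) := by
  classical
  by_contra hcon
  push_neg at hcon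
  rcases cut_dichotomy hlt (blkD F pos b n i + 1) with h | h
  · have h1 : blkD F pos b n i + 1 ≤ i := le_trans h hcon
    have h2 : blkD F pos b n i + 1 ≤ blkD F pos b n i :=
      Nat.le_findGreatest (P := fun j => cutD F pos b n j ≤ i) h1 hcon
    omega
  · rw [h] at hcon; omega

lemma blk_mono {i i' : ℕ} (h : i ≤ i') : blkD F pos b n i ≤ blkD F pos b n i' := by
  classical
  exact Nat.le_findGreatest (P := fun j => cutD F pos b n j ≤ i')
    (le_trans (Nat.findGreatest_le i) h) (le_trans (cut_blk_le i) h)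

include hlt in
lemma full_block (j : ℕ) (h : cutD F pos b n (j + 1) < n) :
    badD F pos b (cutD F pos b n j) (cutD F pos b n (j + 1)) := by
  rcases nextCut_spec hlt (F := F) (pos := pos) (b := b) (cutD F pos b n j) with h2 | h2
  · exact h2.2.1
  · exfalso
    have : cutD F pos b n (j+1) = n := h2.1
    omega

variable (hinj : ∀ X ∈ F, ∀ Z ∈ F, pos X = pos Z → X = Z)

include hlt hinj in
lemma block_colorable (j : ℕ) :
    Fam (segD F pos (cutD F pos b n j) (cutD F pos b n (j + 1))) (b + 1) := by
  set s := cutD F pos b n j with hs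
  have hnext : cutD F pos b n (j + 1) = nextCutD F pos b n s := rfl
  rcases nextCut_spec hlt (F := F) (pos := pos) (b := b) s with h | h
  · -- bad full block: minimality
    rw [hnext]
    set m := nextCutD F pos b n s with hm
    have hm1 : 1 ≤ m := by omega
    have hcol : Fam (segD F pos s (m - 1)) b := by
      by_cases hsm : s < m - 1
      · by_contra hbad
        exact h.2.2 (m-1) hsm (by omega) hbad
      · have : segD F pos s (m-1) = ∅ := by
          apply eq_empty_iff_forall_notMem.2
          rintro X ⟨_, h1, h2⟩
          omega
        rw [this]; exact fam_empty b
    obtain ⟨c, hc1, hc2⟩ := hcol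
    refine ⟨fun X => if pos X = m - 1 then b else c X, ?_, ?_⟩
    · intro X hX
      by_cases hpx : pos X = m - 1
      · simp [hpx]
      · have hX' : X ∈ segD F pos s (m-1) := ⟨hX.1, hX.2.1, by have := hX.2.2; omega⟩
        simp only [hpx, if_false]
        exact lt_of_lt_of_le (hc1 X hX') (by omega)
    · intro X hX Z hZ hne hint
      by_cases hpx : pos X = m - 1 <;> by_cases hpz : pos Z = m - 1
      · exact absurd (hinj X hX.1 Z hZ.1 (by rw [hpx, hpz])) hne
      · have hZ' : Z ∈ segD F pos s (m-1) := ⟨hZ.1, hZ.2.1, by have := hZ.2.2; omega⟩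
        simp only [hpx, hpz, if_true, if_false]
        exact (Nat.ne_of_lt (hc1 Z hZ')).symm
      · have hX' : X ∈ segD F pos s (m-1) := ⟨hX.1, hX.2.1, by have := hX.2.2; omega⟩
        simp only [hpx, hpz, if_true, if_false]
        exact Nat.ne_of_lt (hc1 X hX')
      · have hX' : X ∈ segD F pos s (m-1) := ⟨hX.1, hX.2.1, by have := hX.2.2; omega⟩
        have hZ' : Z ∈ segD F pos s (m-1) := ⟨hZ.1, hZ.2.1, by have := hZ.2.2; omega⟩
        simp only [hpx, hpz, if_false]
        exact hc2 X hX' Z hZ' hne hint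
  · -- last block
    rw [hnext, h.1]
    by_cases hsn : s < n
    · have := h.2 n hsn
      rw [badD] at this
      push_neg at this
      exact fam_le (Nat.le_succ b) this
    · have : segD F pos s n = ∅ := by
        apply eq_empty_iff_forall_notMem.2
        rintro X ⟨_, h1, h2⟩
        omega
      rw [this]; exact fam_empty (b+1)

end Machinery



lemma segD_def (F : Set (Set (ℝ × ℝ))) (pos : Set (ℝ × ℝ) → ℕ) (s t : ℕ) :
    segD F pos s t = {X | X ∈ F ∧ s ≤ pos X ∧ pos X < t} := rfl

/-- Left endpoint of the base of a grounded set. -/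
noncomputable def kfun (X : Set (ℝ × ℝ)) : ℝ := sInf {x : ℝ | (x, 0) ∈ X}

lemma base_prod_mem {X : Set (ℝ × ℝ)} {u v : ℝ} (hb : base X = Icc u v ×ˢ ({0} : Set ℝ))
    {x : ℝ} (hx : x ∈ Icc u v) : ((x, 0) : ℝ × ℝ) ∈ base X := by
  rw [hb]; exact ⟨hx, rfl⟩

lemma kfun_eq {X : Set (ℝ × ℝ)} {u v : ℝ} (huv : u ≤ v)
    (hb : base X = Icc u v ×ˢ ({0} : Set ℝ)) : kfun X = u := by
  have hset : {x : ℝ | ((x, 0) : ℝ × ℝ) ∈ X} = Icc u v := by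
    ext x
    constructor
    · intro h
      have hbm : ((x, 0) : ℝ × ℝ) ∈ base X := ⟨h, rfl⟩
      rw [hb] at hbm
      exact hbm.1
    · intro h
      exact (base_prod_mem hb h).1
  rw [kfun, hset]
  exact csInf_Icc huv

lemma before_irrefl {X : Set (ℝ × ℝ)} (hg : Grounded X) : ¬ Before X X := by
  obtain ⟨-, -, -, u, v, huv, hb⟩ := hg
  intro h
  have hm : ((u, 0) : ℝ × ℝ) ∈ base X := base_prod_mem hb (left_mem_Icc.2 huv)
  exact lt_irrefl u (h _ hm _ hm)

lemma before_iff {F : Set (Set (ℝ × ℝ))} (hF : GroundedFamily F) {X Y : Set (ℝ × ℝ)}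
    (hX : X ∈ F) (hY : Y ∈ F) (hne : X ≠ Y) : Before X Y ↔ kfun X < kfun Y := by
  obtain ⟨-, hg, -, hdisj⟩ := hF
  obtain ⟨-, -, -, u1, v1, h1, hb1⟩ := hg X hX
  obtain ⟨-, -, -, u2, v2, h2, hb2⟩ := hg Y hY
  have hd : Disjoint (base X) (base Y) := hdisj hX hY hne
  rw [kfun_eq h1 hb1, kfun_eq h2 hb2]
  constructor
  · intro hbef
    exact hbef _ (base_prod_mem hb1 (left_mem_Icc.2 h1)) _ (base_prod_mem hb2 (left_mem_Icc.2 h2))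
  · intro hlt
    have hv1 : v1 < u2 := by
      by_contra hcon
      push_neg at hcon
      have hm1 : ((u2, 0) : ℝ × ℝ) ∈ base X := base_prod_mem hb1 ⟨le_of_lt hlt, hcon⟩
      have hm2 : ((u2, 0) : ℝ × ℝ) ∈ base Y := base_prod_mem hb2 (left_mem_Icc.2 h2)
      exact (Set.disjoint_left.1 hd hm1) hm2
    intro p hp q hq
    rw [hb1] at hp
    rw [hb2] at hq
    have hp1 : p.1 ≤ v1 := hp.1.2
    have hq1 : u2 ≤ q.1 := hq.1.1
    linarith

lemma kfun_ne {F : Set (Set (ℝ × ℝ))} (hF : GroundedFamily F) {X Y : Set (ℝ × ℝ)}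
    (hX : X ∈ F) (hY : Y ∈ F) (hne : X ≠ Y) : kfun X ≠ kfun Y := by
  obtain ⟨-, hg, -, hdisj⟩ := hF
  obtain ⟨-, -, -, u1, v1, h1, hb1⟩ := hg X hX
  obtain ⟨-, -, -, u2, v2, h2, hb2⟩ := hg Y hY
  have hd : Disjoint (base X) (base Y) := hdisj hX hY hne
  rw [kfun_eq h1 hb1, kfun_eq h2 hb2]
  intro hequ
  have hm1 : ((u1, 0) : ℝ × ℝ) ∈ base X := base_prod_mem hb1 (left_mem_Icc.2 h1)
  have hm2 : ((u1, 0) : ℝ × ℝ) ∈ base Y := by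
    rw [hequ]
    exact base_prod_mem hb2 (left_mem_Icc.2 h2)
  exact (Set.disjoint_left.1 hd hm1) hm2

lemma decode {a b : ℕ} {p1 p2 κ1 κ2 r1 r2 : ℕ} (hp1 : p1 ≤ 1) (hp2 : p2 ≤ 1)
    (hκ1 : κ1 < b + 1) (hκ2 : κ2 < b + 1) (hr1 : r1 < a) (hr2 : r2 < a)
    (h : p1 * ((b+1)*a) + κ1 * a + r1 = p2 * ((b+1)*a) + κ2 * a + r2) :
    p1 = p2 ∧ κ1 = κ2 ∧ r1 = r2 := by
  have e1 : κ1 * a + a ≤ (b+1) * a := by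
    have := Nat.mul_le_mul_right a (show κ1 + 1 ≤ b + 1 by omega)
    rwa [Nat.succ_mul] at this
  have e2 : κ2 * a + a ≤ (b+1) * a := by
    have := Nat.mul_le_mul_right a (show κ2 + 1 ≤ b + 1 by omega)
    rwa [Nat.succ_mul] at this
  have hpp : p1 = p2 := by
    rcases Nat.lt_trichotomy p1 p2 with hc | hc | hc
    · have h10 : p1 = 0 := by omega
      have h21 : p2 = 1 := by omega
      subst h10; subst h21
      rw [zero_mul, one_mul] at h
      omega
    · exact hc
    · have h10 : p2 = 0 := by omega
      have h21 : p1 = 1 := by omega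
      subst h10; subst h21
      rw [zero_mul, one_mul] at h
      omega
  subst hpp
  have h' : κ1 * a + r1 = κ2 * a + r2 := by omega
  have hκκ : κ1 = κ2 := by
    rcases Nat.lt_trichotomy κ1 κ2 with hc | hc | hc
    · have e3 : κ1 * a + a ≤ κ2 * a := by
        have := Nat.mul_le_mul_right a (Nat.succ_le_of_lt hc)
        rwa [Nat.succ_mul] at this
      omega
    · exact hc
    · have e3 : κ2 * a + a ≤ κ1 * a := by
        have := Nat.mul_le_mul_right a (Nat.succ_le_of_lt hc)
        rwa [Nat.succ_mul] at this
      omega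
  subst hκκ
  exact ⟨rfl, rfl, by omega⟩

lemma main (F : Set (Set (ℝ × ℝ))) (hfin : F.Finite) (k : Set (ℝ × ℝ) → ℝ)
    (hk : ∀ X ∈ F, ∀ Z ∈ F, X ≠ Z → k X ≠ k Z) (a b : ℕ)
    (hH : ∀ H ⊆ F, (∀ X ∈ H, ∀ Z ∈ H, X ≠ Z → (X ∩ Z).Nonempty → k X < k Z →
          ¬ Fam {Y | Y ∈ F ∧ k X < k Y ∧ k Y < k Z} b) → Fam H a) :
    Fam F (2 * a * (b + 1)) := by
  classical
  set F' := hfin.toFinset with hF'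
  set n := F'.card with hn
  set pos : Set (ℝ × ℝ) → ℕ := fun X => (F'.filter fun Y => k Y < k X).card with hposdef
  have hmem : ∀ X, X ∈ F' ↔ X ∈ F := fun X => hfin.mem_toFinset
  have hlt : ∀ X ∈ F, pos X < n := by
    intro X hX
    apply Finset.card_lt_card
    rw [Finset.ssubset_iff_of_subset (Finset.filter_subset _ _)]
    exact ⟨X, (hmem X).2 hX, by simp⟩
  have hmono : ∀ X ∈ F, ∀ Z ∈ F, k X < k Z → pos X < pos Z := by
    intro X hX Z hZ hkk
    apply Finset.card_lt_card
    rw [Finset.ssubset_iff_of_subset]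
    · exact ⟨X, Finset.mem_filter.2 ⟨(hmem X).2 hX, hkk⟩, by simp⟩
    · intro Y hY
      rw [Finset.mem_filter] at *
      exact ⟨hY.1, lt_trans hY.2 hkk⟩
  have hrefl : ∀ X ∈ F, ∀ Z ∈ F, pos X < pos Z → k X < k Z := by
    intro X hX Z hZ hp
    rcases lt_trichotomy (k X) (k Z) with h | h | h
    · exact h
    · exfalso
      have : pos X = pos Z := by simp only [hposdef, h]
      omega
    · exact absurd (hmono Z hZ X hX h) (by omega)
  have hinj : ∀ X ∈ F, ∀ Z ∈ F, pos X = pos Z → X = Z := by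
    intro X hX Z hZ hp
    by_contra hne
    rcases lt_or_gt_of_ne (hk X hX Z hZ hne) with h | h
    · exact absurd (hmono X hX Z hZ h) (by omega)
    · exact absurd (hmono Z hZ X hX h) (by omega)
  set cut := cutD F pos b n with hcutdef
  set blk := blkD F pos b n with hblkdef
  have hbc : ∀ j, Fam (segD F pos (cut j) (cut (j + 1))) (b + 1) :=
    fun j => block_colorable hlt hinj j
  choose ic hic1 hic2 using hbc
  have hself : ∀ X ∈ F, X ∈ segD F pos (cut (blk (pos X))) (cut (blk (pos X) + 1)) := by
    intro X hX
    rw [segD_def]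
    exact ⟨hX, cut_blk_le _, lt_cut_blk_succ hlt _ (hlt X hX)⟩
  set T : ℕ → ℕ → Set (Set (ℝ × ℝ)) :=
    fun p κ => {X | X ∈ F ∧ blk (pos X) % 2 = p ∧ ic (blk (pos X)) X = κ} with hTdef
  have hTcol : ∀ p κ, Fam (T p κ) a := by
    intro p κ
    apply hH _ (fun X hX => hX.1)
    intro X hX Z hZ hne hint hkk
    have hXF := hX.1
    have hZF := hZ.1
    have hplt : pos X < pos Z := hmono X hXF Z hZF hkk
    have hj : blk (pos X) ≤ blk (pos Z) := blk_mono (le_of_lt hplt)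
    by_cases hjeq : blk (pos X) = blk (pos Z)
    · exfalso
      have h1 := hself X hXF
      have h2 := hself Z hZF
      rw [hjeq] at h1
      have hne' := hic2 (blk (pos Z)) X h1 Z h2 hne hint
      have e1 : ic (blk (pos X)) X = κ := hX.2.2
      rw [hjeq] at e1
      exact hne' (by rw [e1, hZ.2.2])
    · have hj2 : blk (pos X) + 2 ≤ blk (pos Z) := by
        have hpX := hX.2.1
        have hpZ := hZ.2.1
        omega
      have hcc : cut (blk (pos X) + 2) ≤ cut (blk (pos Z)) := cut_mono hlt (by omega)
      have hcz : cut (blk (pos Z)) ≤ pos Z := cut_blk_le _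
      have hmidlt : cut (blk (pos X) + 2) < n := lt_of_le_of_lt (le_trans hcc hcz) (hlt Z hZF)
      have hbad : ¬ Fam (segD F pos (cut (blk (pos X) + 1)) (cut (blk (pos X) + 2))) b :=
        full_block hlt (blk (pos X) + 1) hmidlt
      intro hcol
      apply hbad
      apply fam_mono _ hcol
      rw [segD_def]
      rintro Y ⟨hYF, hY1, hY2⟩
      have hXlt : pos X < cut (blk (pos X) + 1) := lt_cut_blk_succ hlt _ (hlt X hXF)
      refine ⟨hYF, ?_, ?_⟩
      · exact hrefl X hXF Y hYF (by omega)
      · exact hrefl Y hYF Z hZF (by omega)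
  choose c1 hc11 hc12 using hTcol
  refine ⟨fun X => (blk (pos X) % 2) * ((b+1)*a) + (ic (blk (pos X)) X) * a
      + c1 (blk (pos X) % 2) (ic (blk (pos X)) X) X, ?_, ?_⟩
  · intro X hX
    show blk (pos X) % 2 * ((b+1)*a) + ic (blk (pos X)) X * a
      + c1 (blk (pos X) % 2) (ic (blk (pos X)) X) X < 2 * a * (b + 1)
    have hκ : ic (blk (pos X)) X < b + 1 := hic1 _ X (hself X hX)
    have hr : c1 (blk (pos X) % 2) (ic (blk (pos X)) X) X < a :=
      hc11 _ _ X ⟨hX, rfl, rfl⟩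
    have hp : blk (pos X) % 2 ≤ 1 := by omega
    have h1 : (ic (blk (pos X)) X) * a + a ≤ (b+1) * a := by
      have := Nat.mul_le_mul_right a (show ic (blk (pos X)) X + 1 ≤ b + 1 by omega)
      rwa [Nat.succ_mul] at this
    have h2 : (blk (pos X) % 2) * ((b+1)*a) ≤ (b+1)*a := by
      calc (blk (pos X) % 2) * ((b+1)*a) ≤ 1 * ((b+1)*a) := Nat.mul_le_mul_right _ hp
        _ = (b+1)*a := one_mul _
    have h3 : 2 * a * (b+1) = (b+1)*a + (b+1)*a := by ring
    omega
  · intro X hX Z hZ hne hint heq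
    have hκX : ic (blk (pos X)) X < b + 1 := hic1 _ X (hself X hX)
    have hκZ : ic (blk (pos Z)) Z < b + 1 := hic1 _ Z (hself Z hZ)
    have hrX : c1 (blk (pos X) % 2) (ic (blk (pos X)) X) X < a := hc11 _ _ X ⟨hX, rfl, rfl⟩
    have hrZ : c1 (blk (pos Z) % 2) (ic (blk (pos Z)) Z) Z < a := hc11 _ _ Z ⟨hZ, rfl, rfl⟩
    obtain ⟨hpp, hκκ, hrr⟩ := decode (by omega) (by omega) hκX hκZ hrX hrZ heq
    have hZT : Z ∈ T (blk (pos X) % 2) (ic (blk (pos X)) X) := ⟨hZ, hpp.symm, hκκ.symm⟩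
    have hXT : X ∈ T (blk (pos X) % 2) (ic (blk (pos X)) X) := ⟨hX, rfl, rfl⟩
    have := hc12 (blk (pos X) % 2) (ic (blk (pos X)) X) X hXT Z hZT hne hint
    rw [← hpp, ← hκκ] at hrr
    exact this hrr


end DecompAux

end

/-- Decomposition lemma: from a grounded family of chromatic number `> 2a(b+1)`
extract a subfamily `H` with `χ(H) > a` all of whose intersecting pairs span a
subfamily of chromatic number `> b`. -/
theorem decomposition_graph
    (F : Set (Set (ℝ × ℝ))) (hF : GroundedFamily F) (a b : ℕ)
    (hχ : ¬ FamColorable F (2 * a * (b + 1))) :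
    ∃ H ⊆ F, ¬ FamColorable H a ∧
      ∀ H₁ ∈ H, ∀ H₂ ∈ H, H₁ ≠ H₂ → (H₁ ∩ H₂).Nonempty → Before H₁ H₂ →
        ¬ FamColorable {Y ∈ F | Before H₁ Y ∧ Before Y H₂} b := by
  classical
  by_contra hcon
  push_neg at hcon
  apply hχ
  apply DecompAux.main F hF.1 DecompAux.kfun
    (fun X hX Z hZ hne => DecompAux.kfun_ne hF hX hZ hne) a b
  intro H hHF hheavy
  by_contra hHa
  obtain ⟨H₁, h1H, H₂, h2H, hne, hint, hbef, hcolb⟩ := hcon H hHF hHa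
  have h1F := hHF h1H
  have h2F := hHF h2H
  have hk12 : DecompAux.kfun H₁ < DecompAux.kfun H₂ := (DecompAux.before_iff hF h1F h2F hne).1 hbef
  have hsets : {Y | Y ∈ F ∧ DecompAux.kfun H₁ < DecompAux.kfun Y ∧ DecompAux.kfun Y < DecompAux.kfun H₂}
      = {Y ∈ F | Before H₁ Y ∧ Before Y H₂} := by
    ext Y
    simp only [mem_setOf_eq, mem_sep_iff]
    constructor
    · rintro ⟨hYF, hky1, hky2⟩
      have hne1 : H₁ ≠ Y := by rintro rfl; exact lt_irrefl _ hky1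
      have hne2 : Y ≠ H₂ := by rintro rfl; exact lt_irrefl _ hky2
      exact ⟨hYF, ⟨(DecompAux.before_iff hF h1F hYF hne1).2 hky1,
        (DecompAux.before_iff hF hYF h2F hne2).2 hky2⟩⟩
    · rintro ⟨hYF, hb1, hb2⟩
      have hgY : Grounded Y := hF.2.1 Y hYF
      have hne1 : H₁ ≠ Y := by
        rintro rfl
        exact DecompAux.before_irrefl hgY hb1
      have hne2 : Y ≠ H₂ := by
        rintro rfl
        exact DecompAux.before_irrefl hgY hb2
      exact ⟨hYF, ⟨(DecompAux.before_iff hF h1F hYF hne1).1 hb1,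
        (DecompAux.before_iff hF hYF h2F hne2).1 hb2⟩⟩
  apply hheavy H₁ h1H H₂ h2H hne hint hk12
  rw [hsets]
  exact hcolb
end

section
/- Let F be a grounded family and a ≥ 1 an integer with χ(F) > 2a. Then there is a subfamily G ⊆ F that is externally supported in F and satisfies χ(G) > a. -/
open Set

noncomputable section AuxDecomp

open Bornology

/-- Adjacency in the intersection graph of `F`. -/
def AdjF (F : Set (Set (ℝ × ℝ))) (X Y : Set (ℝ × ℝ)) : Prop :=
  X ∈ F ∧ Y ∈ F ∧ X ≠ Y ∧ (X ∩ Y).Nonempty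

/-- There is a walk of length `n` in `F` from `X₀` to `Y`. -/
def ReachN (F : Set (Set (ℝ × ℝ))) (X₀ : Set (ℝ × ℝ)) (n : ℕ) (Y : Set (ℝ × ℝ)) : Prop :=
  ∃ f : ℕ → Set (ℝ × ℝ), f 0 = X₀ ∧ f n = Y ∧ ∀ i < n, AdjF F (f i) (f (i + 1))

/-- The BFS level `d` from `X₀`. -/
def lvlSet (F : Set (Set (ℝ × ℝ))) (X₀ : Set (ℝ × ℝ)) (d : ℕ) : Set (Set (ℝ × ℝ)) :=
  {Y | Y ∈ F ∧ ReachN F X₀ d Y ∧ ∀ e < d, ¬ ReachN F X₀ e Y}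

/-- The connected component of `X₀`. -/
def compSet (F : Set (Set (ℝ × ℝ))) (X₀ : Set (ℝ × ℝ)) : Set (Set (ℝ × ℝ)) :=
  {Y | Y ∈ F ∧ ∃ n, ReachN F X₀ n Y}

theorem reachN_zero {F : Set (Set (ℝ × ℝ))} {X₀ Y : Set (ℝ × ℝ)}
    (h : ReachN F X₀ 0 Y) : Y = X₀ := by
  obtain ⟨f, h0, h1, -⟩ := h
  exact h1.symm.trans h0

theorem reachN_zero_self (F : Set (Set (ℝ × ℝ))) (X₀ : Set (ℝ × ℝ)) :
    ReachN F X₀ 0 X₀ :=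
  ⟨fun _ => X₀, rfl, rfl, fun i hi => absurd hi (Nat.not_lt_zero i)⟩

theorem reachN_succ {F : Set (Set (ℝ × ℝ))} {X₀ Y Z : Set (ℝ × ℝ)} {n : ℕ}
    (h : ReachN F X₀ n Y) (hA : AdjF F Y Z) : ReachN F X₀ (n + 1) Z := by
  obtain ⟨f, h0, hn, hc⟩ := h
  refine ⟨fun i => if i ≤ n then f i else Z, by simp [h0], by simp, ?_⟩
  intro i hi
  rcases Nat.lt_or_ge i n with h | h
  · have e1 : (if i ≤ n then f i else Z) = f i := if_pos (le_of_lt h)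
    have e2 : (if i + 1 ≤ n then f (i + 1) else Z) = f (i + 1) := if_pos h
    show AdjF F (if i ≤ n then f i else Z) (if i + 1 ≤ n then f (i + 1) else Z)
    rw [e1, e2]
    exact hc i h
  · have hin : i = n := by omega
    subst hin
    have e1 : (if i ≤ i then f i else Z) = f i := if_pos le_rfl
    have e2 : (if i + 1 ≤ i then f (i + 1) else Z) = Z := if_neg (by omega)
    show AdjF F (if i ≤ i then f i else Z) (if i + 1 ≤ i then f (i + 1) else Z)
    rw [e1, e2, hn]
    exact hA

/-- The rightward horizontal ray at height `0`. -/
def ray (r : ℝ) : Set (ℝ × ℝ) := Ici r ×ˢ ({0} : Set ℝ)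

theorem mem_ray {r t : ℝ} (h : r ≤ t) : (t, 0) ∈ ray r := Set.mem_prod.mpr ⟨h, rfl⟩

theorem ray_subset_upper (r : ℝ) : ray r ⊆ UpperHalf := by
  rintro ⟨x, y⟩ hp
  have h2 : y ∈ ({0} : Set ℝ) := (Set.mem_prod.mp hp).2
  simp only [Set.mem_singleton_iff] at h2
  simp [UpperHalf, h2]

theorem ray_pathConnected (r : ℝ) : IsPathConnected (ray r) :=
  ((convex_Ici r).prod (convex_singleton (0 : ℝ))).isPathConnected ⟨(r, 0), mem_ray le_rfl⟩

theorem ray_unbounded (r : ℝ) : ¬ IsBounded (ray r) := by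
  intro h
  obtain ⟨C, hC⟩ := isBounded_iff_forall_norm_le.mp h
  have hmem : (max r C + 1, (0 : ℝ)) ∈ ray r := mem_ray (by
    have := le_max_left r C; linarith)
  have hnorm := hC _ hmem
  have h1 : |max r C + 1| ≤ ‖(max r C + 1, (0 : ℝ))‖ := by
    rw [Prod.norm_def]
    exact le_max_left _ _
  have h2 : max r C + 1 ≤ |max r C + 1| := le_abs_self _
  have := le_max_right r C
  linarith

theorem unbounded_mono {s t : Set (ℝ × ℝ)} (hst : s ⊆ t) (h : ¬ IsBounded s) :
    ¬ IsBounded t := fun hb => h (hb.subset hst)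

theorem GroundedFamily.subset' {F G : Set (Set (ℝ × ℝ))} (hF : GroundedFamily F)
    (hGF : G ⊆ F) : GroundedFamily G :=
  ⟨hF.1.subset hGF, fun X hX => hF.2.1 X (hGF hX),
    fun H hH hne => hF.2.2.1 H (hH.trans hGF) hne, hF.2.2.2.mono hGF⟩

end AuxDecomp

section SuppDecomp

open Bornology

theorem level_supported (F : Set (Set (ℝ × ℝ))) (hF : GroundedFamily F)
    (X₀ : Set (ℝ × ℝ)) (hX₀F : X₀ ∈ F) (r : ℝ)
    (hr0 : (r, (0:ℝ)) ∈ X₀)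
    (hrmax : ∀ Z ∈ F, ∀ p ∈ Z, p.2 = (0:ℝ) → p.1 ≤ r)
    (hrX₀ : ∀ Z ∈ F, Z ≠ X₀ → (r, (0:ℝ)) ∉ Z)
    (d : ℕ) (hd : 1 ≤ d) (X : Set (ℝ × ℝ)) (hX : X ∈ lvlSet F X₀ d) :
    ∃ Y ∈ F, (Y ∩ X).Nonempty ∧ (Y ∩ extSet (⋃₀ lvlSet F X₀ d)).Nonempty := by
  obtain ⟨hXF, ⟨f, hf0, hfd, hadj⟩, hmin⟩ := hX
  have hfF : ∀ i ≤ d, f i ∈ F := by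
    intro i hi
    rcases lt_or_eq_of_le hi with h | h
    · exact (hadj i h).1
    · rw [h, hfd]; exact hXF
  -- the chain prefix is disjoint from all members of level d
  have hdisj : ∀ i, i + 1 < d → ∀ Z ∈ lvlSet F X₀ d, ∀ q ∈ f i, q ∉ Z := by
    intro i hi Z hZ q hq hqZ
    have hri : ReachN F X₀ i (f i) := ⟨f, hf0, rfl, fun j hj => hadj j (by omega)⟩
    by_cases he : f i = Z
    · exact hZ.2.2 i (by omega) (he ▸ hri)
    · exact hZ.2.2 (i + 1) hi
        (reachN_succ hri ⟨hfF i (by omega), hZ.1, he, ⟨q, hq, hqZ⟩⟩)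
  -- the ray is disjoint from all members of level d
  have hray : ∀ q ∈ ray r, ∀ Z ∈ lvlSet F X₀ d, q ∉ Z := by
    rintro ⟨x, y⟩ hq Z hZ hqZ
    have hx : r ≤ x := (Set.mem_prod.mp hq).1
    have hy : y = 0 := (Set.mem_prod.mp hq).2
    subst hy
    have hle : x ≤ r := hrmax Z hZ.1 (x, 0) hqZ rfl
    have hxr : x = r := le_antisymm hle hx
    subst hxr
    have hZX₀ : Z ≠ X₀ := by
      intro h
      exact hZ.2.2 0 hd (h ▸ reachN_zero_self F X₀)
    exact hrX₀ Z hZ.1 hZX₀ hqZ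
  set B : Set (ℝ × ℝ) := ray r ∪ ⋃ (i : ℕ) (_ : i < d - 1), f i with hB
  have hsplit : ∀ k : ℕ, (⋃ (i : ℕ) (_ : i < k + 1), f i)
      = (⋃ (i : ℕ) (_ : i < k), f i) ∪ f k := by
    intro k
    ext q
    simp only [Set.mem_iUnion, Set.mem_union]
    constructor
    · rintro ⟨i, hi, hq⟩
      rcases (by omega : i < k ∨ i = k) with h | h
      · exact Or.inl ⟨i, h, hq⟩
      · exact Or.inr (h ▸ hq)
    · rintro (⟨i, hi, hq⟩ | hq)
      · exact ⟨i, by omega, hq⟩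
      · exact ⟨k, by omega, hq⟩
  have hpc : ∀ k, k ≤ d → IsPathConnected (ray r ∪ ⋃ (i : ℕ) (_ : i < k), f i) := by
    intro k
    induction k with
    | zero =>
      intro _
      have : (⋃ (i : ℕ) (_ : i < 0), f i) = (∅ : Set (ℝ × ℝ)) := by simp
      rw [this, Set.union_empty]
      exact ray_pathConnected r
    | succ k IH =>
      intro hk1
      rw [hsplit k, ← Set.union_assoc]
      have hfk : IsPathConnected (f k) := (hF.2.1 (f k) (hfF k (by omega))).2.2.1
      refine (IH (by omega)).union hfk ?_
      rcases Nat.eq_zero_or_pos k with rfl | hk0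
      · exact ⟨(r, 0), Or.inl (mem_ray le_rfl), hf0 ▸ hr0⟩
      · obtain ⟨q, hq⟩ := (hadj (k - 1) (by omega)).2.2.2
        have hkk : k - 1 + 1 = k := by omega
        exact ⟨q, Or.inr (Set.mem_iUnion.2 ⟨k - 1, Set.mem_iUnion.2 ⟨by omega, hq.1⟩⟩),
          hkk ▸ hq.2⟩
  have hBpc : IsPathConnected B := hpc (d - 1) (by omega)
  have hBsub : B ⊆ UpperHalf \ ⋃₀ lvlSet F X₀ d := by
    intro q hq
    constructor
    · rcases hq with h | h
      · exact ray_subset_upper r h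
      · obtain ⟨i, hi⟩ := Set.mem_iUnion.mp h
        obtain ⟨hilt, hqi⟩ := Set.mem_iUnion.mp hi
        exact (hF.2.1 (f i) (hfF i (by omega))).1 hqi
    · rintro ⟨Z, hZ, hqZ⟩
      rcases hq with h | h
      · exact hray q h Z hZ hqZ
      · obtain ⟨i, hi⟩ := Set.mem_iUnion.mp h
        obtain ⟨hilt, hqi⟩ := Set.mem_iUnion.mp hi
        exact hdisj i (by omega) Z hZ q hqi hqZ
  have hBunb : ¬ IsBounded B := unbounded_mono Set.subset_union_left (ray_unbounded r)
  have hext : ∀ p ∈ B, p ∈ extSet (⋃₀ lvlSet F X₀ d) := by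
    intro p hp
    refine ⟨hBsub hp, ?_⟩
    exact unbounded_mono (hBpc.subset_pathComponentIn hp hBsub) hBunb
  rcases eq_or_lt_of_le hd with hd1 | hd2
  · -- d = 1 : the supporter is X₀ itself
    refine ⟨X₀, hX₀F, ?_, ?_⟩
    · have := (hadj 0 (by omega)).2.2.2
      rw [hf0] at this
      have h1 : f (0 + 1) = X := by rw [← hd1] at hfd; exact hfd
      rwa [h1] at this
    · exact ⟨(r, 0), hr0, hext (r, 0) (Or.inl (mem_ray le_rfl))⟩
  · -- d ≥ 2 : the supporter is f (d - 1)
    refine ⟨f (d - 1), hfF (d - 1) (by omega), ?_, ?_⟩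
    · have := (hadj (d - 1) (by omega)).2.2.2
      have hdd : d - 1 + 1 = d := by omega
      rw [hdd, hfd] at this
      exact this
    · obtain ⟨q, hq⟩ := (hadj (d - 2) (by omega)).2.2.2
      have hdd : d - 2 + 1 = d - 1 := by omega
      rw [hdd] at hq
      refine ⟨q, hq.2, hext q (Or.inr ?_)⟩
      exact Set.mem_iUnion.2 ⟨d - 2, Set.mem_iUnion.2 ⟨by omega, hq.1⟩⟩
end SuppDecomp

theorem decomposition_aux (a : ℕ) (ha : 1 ≤ a) :
    ∀ n (F : Set (Set (ℝ × ℝ))), F.ncard ≤ n → GroundedFamily F →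
      ¬ FamColorable F (2 * a) →
      ∃ G ⊆ F,
        (∀ X ∈ G, ∃ Y ∈ F, (Y ∩ X).Nonempty ∧ (Y ∩ extSet (⋃₀ G)).Nonempty) ∧
        ¬ FamColorable G a := by
  intro n
  induction n with
  | zero =>
    intro F hcard hF hχ
    exfalso
    have hF0 : F = ∅ := by
      rw [← Set.ncard_eq_zero hF.1]; omega
    subst hF0
    exact hχ ⟨fun _ => 0, fun X hX => absurd hX (Set.notMem_empty X),
      fun X hX => absurd hX (Set.notMem_empty X)⟩
  | succ n ih =>
    intro F hcard hF hχ
    classical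
    have hFne : F.Nonempty := by
      rcases Set.eq_empty_or_nonempty F with h | h
      · exfalso
        subst h
        exact hχ ⟨fun _ => 0, fun X hX => absurd hX (Set.notMem_empty X),
          fun X hX => absurd hX (Set.notMem_empty X)⟩
      · exact h
    set g : Set (ℝ × ℝ) → ℝ := fun X => sSup (Prod.fst '' base X) with hgdef
    have hg : ∀ X ∈ F, (g X, (0:ℝ)) ∈ base X ∧ ∀ p ∈ base X, p.1 ≤ g X := by
      intro X hX
      obtain ⟨-, -, -, aX, bX, hab, hbase⟩ := hF.2.1 X hX
      have himg : Prod.fst '' base X = Icc aX bX := by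
        rw [hbase]
        ext t
        simp only [Set.mem_image, Set.mem_prod, Set.mem_singleton_iff]
        constructor
        · rintro ⟨p, ⟨hp1, _⟩, hp⟩; exact hp ▸ hp1
        · intro ht; exact ⟨(t, 0), ⟨ht, rfl⟩, rfl⟩
      have hgX : g X = bX := by rw [hgdef]; simp only; rw [himg, csSup_Icc hab]
      constructor
      · rw [hbase, hgX]
        exact Set.mem_prod.mpr ⟨Set.right_mem_Icc.mpr hab, rfl⟩
      · intro p hp
        rw [hbase] at hp
        have := (Set.mem_prod.mp hp).1
        rw [hgX]
        exact this.2
    obtain ⟨X₀, hX₀F, hX₀max⟩ := Set.exists_max_image F g hF.1 hFne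
    set r := g X₀ with hrdef
    have hr0 : (r, (0:ℝ)) ∈ X₀ := ((hg X₀ hX₀F).1).1
    have hrmax : ∀ Z ∈ F, ∀ p ∈ Z, p.2 = (0:ℝ) → p.1 ≤ r := by
      intro Z hZ p hp h0
      exact le_trans ((hg Z hZ).2 p ⟨hp, h0⟩) (hX₀max Z hZ)
    have hrX₀ : ∀ Z ∈ F, Z ≠ X₀ → (r, (0:ℝ)) ∉ Z := by
      intro Z hZ hne h
      have h1 : (r, (0:ℝ)) ∈ base Z := ⟨h, rfl⟩
      have h2 : (r, (0:ℝ)) ∈ base X₀ := (hg X₀ hX₀F).1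
      exact Set.disjoint_left.mp (hF.2.2.2 hZ hX₀F hne) h1 h2
    set C := compSet F X₀ with hCdef
    have hCF : C ⊆ F := fun Y hY => hY.1
    have cross : ∀ U ∈ C, ∀ V ∈ F, U ≠ V → (U ∩ V).Nonempty → V ∈ C := by
      intro U hU V hV hne hint
      obtain ⟨nU, hn⟩ := hU.2
      exact ⟨hV, nU + 1, reachN_succ hn ⟨hU.1, hV, hne, hint⟩⟩
    by_cases hCcol : FamColorable C (2 * a)
    · -- recurse on F \ C
      have hX₀C : X₀ ∈ C := ⟨hX₀F, 0, reachN_zero_self F X₀⟩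
      have hssub : F \ C ⊂ F :=
        ⟨Set.diff_subset, fun hsub => (hsub hX₀F).2 hX₀C⟩
      have hcard' : (F \ C).ncard ≤ n := by
        have := Set.ncard_lt_ncard hssub hF.1
        omega
      have hχ' : ¬ FamColorable (F \ C) (2 * a) := by
        rintro ⟨c₂, hc₂b, hc₂p⟩
        obtain ⟨c₁, hc₁b, hc₁p⟩ := hCcol
        apply hχ
        refine ⟨fun X => if X ∈ C then c₁ X else c₂ X, ?_, ?_⟩
        · intro X hX
          by_cases h : X ∈ C
          · simpa [h] using hc₁b X h
          · simpa [h] using hc₂b X ⟨hX, h⟩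
        · intro X hX Y hY hne hint
          by_cases h1 : X ∈ C <;> by_cases h2 : Y ∈ C <;> simp only [h1, h2, if_pos, if_neg, if_true, if_false]
          · exact hc₁p X h1 Y h2 hne hint
          · exact absurd (cross X h1 Y hY hne hint) h2
          · exact absurd (cross Y h2 X hX (Ne.symm hne)
              ⟨hint.choose, hint.choose_spec.2, hint.choose_spec.1⟩) h1
          · exact hc₂p X ⟨hX, h1⟩ Y ⟨hY, h2⟩ hne hint
      obtain ⟨G, hGsub, hsupp, hGcol⟩ := ih (F \ C) hcard' (hF.subset' Set.diff_subset) hχ'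
      refine ⟨G, hGsub.trans Set.diff_subset, ?_, hGcol⟩
      intro X hX
      obtain ⟨Y, hY, h1, h2⟩ := hsupp X hX
      exact ⟨Y, hY.1, h1, h2⟩
    · -- find a level of chromatic number > a
      by_cases hlev : ∃ d, 1 ≤ d ∧ ¬ FamColorable (lvlSet F X₀ d) a
      · obtain ⟨d, hd1, hdcol⟩ := hlev
        refine ⟨lvlSet F X₀ d, fun Y hY => hY.1, ?_, hdcol⟩
        intro X hX
        exact level_supported F hF X₀ hX₀F r hr0 hrmax hrX₀ d hd1 X hX
      · exfalso
        apply hCcol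
        push_neg at hlev
        have hlevall : ∀ d, FamColorable (lvlSet F X₀ d) a := by
          intro d
          cases d with
          | zero =>
            refine ⟨fun _ => 0, fun X _ => show 0 < a from ha, ?_⟩
            intro X hX Y hY hne _
            exact absurd ((reachN_zero hX.2.1).trans (reachN_zero hY.2.1).symm) hne
          | succ d => exact hlev (d + 1) (by omega)
        choose col hcolb hcolp using hlevall
        set lvl : Set (ℝ × ℝ) → ℕ := fun Y => sInf {m | ReachN F X₀ m Y} with hlvldef
        have hmemlvl : ∀ Y ∈ C, Y ∈ lvlSet F X₀ (lvl Y) := by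
          intro Y hY
          have hne : {m | ReachN F X₀ m Y}.Nonempty := hY.2
          refine ⟨hY.1, Nat.sInf_mem hne, ?_⟩
          intro e he hre
          have h' : lvl Y ≤ e := Nat.sInf_le hre
          omega
        refine ⟨fun X => col (lvl X) X + a * (lvl X % 2), ?_, ?_⟩
        · intro X hX
          show col (lvl X) X + a * (lvl X % 2) < 2 * a
          have h1 : col (lvl X) X < a := hcolb (lvl X) X (hmemlvl X hX)
          have h3 : a * (lvl X % 2) ≤ a * 1 := Nat.mul_le_mul_left a (by omega)
          rw [Nat.mul_one] at h3
          omega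
        · intro X hX Y hY hne hint
          have hXL := hmemlvl X hX
          have hYL := hmemlvl Y hY
          have hle1 : lvl Y ≤ lvl X + 1 :=
            Nat.sInf_le (reachN_succ hXL.2.1 ⟨hX.1, hY.1, hne, hint⟩)
          have hle2 : lvl X ≤ lvl Y + 1 :=
            Nat.sInf_le (reachN_succ hYL.2.1 ⟨hY.1, hX.1, Ne.symm hne,
              ⟨hint.choose, hint.choose_spec.2, hint.choose_spec.1⟩⟩)
          show col (lvl X) X + a * (lvl X % 2) ≠ col (lvl Y) Y + a * (lvl Y % 2)
          rcases eq_or_ne (lvl X) (lvl Y) with heq | hneq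
          · have hcc : col (lvl X) X ≠ col (lvl X) Y :=
              hcolp (lvl X) X hXL Y (heq ▸ hYL) hne hint
            rw [← heq]
            intro h
            exact hcc (Nat.add_right_cancel h)
          · have hbX : col (lvl X) X < a := hcolb _ _ hXL
            have hbY : col (lvl Y) Y < a := hcolb _ _ hYL
            have hoff : lvl X % 2 = 0 ∧ lvl Y % 2 = 1 ∨ lvl X % 2 = 1 ∧ lvl Y % 2 = 0 := by
              omega
            rcases hoff with ⟨h1, h2⟩ | ⟨h1, h2⟩ <;> rw [h1, h2] <;>
              simp only [Nat.mul_zero, Nat.mul_one] <;> omega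

theorem decomposition_level'
    (F : Set (Set (ℝ × ℝ))) (hF : GroundedFamily F) (a : ℕ) (ha : 1 ≤ a)
    (hχ : ¬ FamColorable F (2 * a)) :
    ∃ G ⊆ F,
      (∀ X ∈ G, ∃ Y ∈ F, (Y ∩ X).Nonempty ∧ (Y ∩ extSet (⋃₀ G)).Nonempty) ∧
      ¬ FamColorable G a :=
  decomposition_aux a ha F.ncard F le_rfl hF hχ

/-- Decomposition lemma: a grounded family of chromatic number `> 2a` contains an
externally supported subfamily of chromatic number `> a`. -/
theorem decomposition_level
    (F : Set (Set (ℝ × ℝ))) (hF : GroundedFamily F) (a : ℕ) (ha : 1 ≤ a)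
    (hχ : ¬ FamColorable F (2 * a)) :
    ∃ G ⊆ F,
      (∀ X ∈ G, ∃ Y ∈ F, (Y ∩ X).Nonempty ∧ (Y ∩ extSet (⋃₀ G)).Nonempty) ∧
      ¬ FamColorable G a :=
  decomposition_level' F hF a ha hχ
end
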